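/- arXiv:2111.12168 — 11 statements merged into one kernel-verified Lean document; each statement's English description precedes it below -/
import Mathlib

section
/- Let G be a bipartite graph with bipartition (X, Y). If G has no matching covering X, then there exists a non-empty subset X' of X such that the induced subgraph G[X' ∪ N(X')] has a matching covering N(X'). -/
open Set

namespace Paper

variable {V : Type*}

/-- `u` and `v` are adjacent in the underlying graph of the digraph `E`. -/
def Adj (E : V → V → Prop) (u v : V) : Prop := E u v ∨ E v u

/-- A stable set: pairwise non-adjacent vertices. -/
def Stable (E : V → V → Prop) (S : Set V) : Prop :=
  ∀ u ∈ S, ∀ v ∈ S, u ≠ v → ¬ Adj E u v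

/-- A stable set of the subdigraph induced by `W`. -/
def StableOn (E : V → V → Prop) (W S : Set V) : Prop := S ⊆ W ∧ Stable E S

/-- A maximum stable set of the subdigraph induced by `W`. -/
def MaxStableOn (E : V → V → Prop) (W S : Set V) : Prop :=
  StableOn E W S ∧ ∀ T, StableOn E W T → T.ncard ≤ S.ncard

/-- Neighborhood of `S`: vertices outside `S` adjacent to some vertex of `S`. -/
def Nbhd (E : V → V → Prop) (S : Set V) : Set V :=
  {v | v ∉ S ∧ ∃ u ∈ S, Adj E u v}

/-- A (nonempty) directed path, as a list of vertices. -/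
def IsPath (E : V → V → Prop) (p : List V) : Prop := p ≠ [] ∧ p.Chain' E

/-- A path partition of the vertex set `W` into vertex-disjoint directed paths. -/
def PathPartitionOn (E : V → V → Prop) (W : Set V) (P : List (List V)) : Prop :=
  (∀ p ∈ P, IsPath E p) ∧ P.flatten.Nodup ∧ ∀ v, v ∈ P.flatten ↔ v ∈ W

/-- `S` and `P` are orthogonal: each path contains exactly one vertex of `S`. -/
def Orthogonal (S : Set V) (P : List (List V)) : Prop :=
  ∀ p ∈ P, ∃! v, v ∈ p ∧ v ∈ S

/-- An `S`-path partition of `W`. -/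
def SPartOn (E : V → V → Prop) (W S : Set V) (P : List (List V)) : Prop :=
  PathPartitionOn E W P ∧ Orthogonal S P

/-- An `S_BE`-path partition of `W`: orthogonal and every vertex of `S` starts or
ends its path. -/
def BEPartOn (E : V → V → Prop) (W S : Set V) (P : List (List V)) : Prop :=
  SPartOn E W S P ∧ ∀ p ∈ P, ∀ v ∈ p, v ∈ S → p.head? = some v ∨ p.getLast? = some v

/-- The induced subdigraph on `W` satisfies the α-property. -/
def AlphaPropOn (E : V → V → Prop) (W : Set V) : Prop :=
  ∀ S, MaxStableOn E W S → ∃ P, SPartOn E W S P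

/-- The induced subdigraph on `W` satisfies the BE-property. -/
def BEPropOn (E : V → V → Prop) (W : Set V) : Prop :=
  ∀ S, MaxStableOn E W S → ∃ P, BEPartOn E W S P

/-- A matching (w.r.t. a symmetric-or-not adjacency `A`) whose edges go from `X`
to `Y`: pairwise vertex-disjoint edges. -/
def MatchingBetween (A : V → V → Prop) (X Y : Set V) (M : Set (V × V)) : Prop :=
  (∀ e ∈ M, e.1 ∈ X ∧ e.2 ∈ Y ∧ A e.1 e.2) ∧
  (∀ e ∈ M, ∀ f ∈ M, e ≠ f →
    e.1 ≠ f.1 ∧ e.1 ≠ f.2 ∧ e.2 ≠ f.1 ∧ e.2 ≠ f.2)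

/-- The matching `M` covers the set `X`. -/
def Covers (M : Set (V × V)) (X : Set V) : Prop :=
  ∀ x ∈ X, ∃ e ∈ M, e.1 = x ∨ e.2 = x

/-- Arc-locally in-semicomplete digraph. -/
def ArcLocallyInSemicomplete (E : V → V → Prop) : Prop :=
  ∀ u v, E u v → ∀ a b, E a u → E b v → a = b ∨ Adj E a b

/-- `A ↦ B`: every vertex of `A` dominates every vertex of `B`, and no edge from
`B` to `A`. -/
def Domin (E : V → V → Prop) (A B : Set V) : Prop :=
  (∀ a ∈ A, ∀ b ∈ B, E a b) ∧ ∀ a ∈ A, ∀ b ∈ B, ¬ E b a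

/-- `A ⇒ B`: there is no edge from `B` to `A`. -/
def NoBack (E : V → V → Prop) (A B : Set V) : Prop :=
  ∀ a ∈ A, ∀ b ∈ B, ¬ E b a

/-- The induced subdigraph on `W` has bipartite underlying graph. -/
def BipartiteOn (E : V → V → Prop) (W : Set V) : Prop :=
  ∃ A B : Set V, A ∪ B = W ∧ Disjoint A B ∧
    (∀ u ∈ A, ∀ v ∈ A, ¬ Adj E u v) ∧ (∀ u ∈ B, ∀ v ∈ B, ¬ Adj E u v)

/-- There is a directed walk of length `n` from `u` to `v`. -/
def WalkLen (E : V → V → Prop) : ℕ → V → V → Prop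
  | 0, u, v => u = v
  | n+1, u, v => ∃ w, E u w ∧ WalkLen E n w v

/-- The set of vertices at distance exactly `d` from the set `A`. -/
def Nd (E : V → V → Prop) (A : Set V) (d : ℕ) : Set V :=
  {v | (∃ u ∈ A, WalkLen E d u v) ∧ ∀ d' < d, ¬ ∃ u ∈ A, WalkLen E d' u v}

/-- Out-neighborhood of a set: vertices outside `A` dominated by some vertex of `A`. -/
def NplusSet (E : V → V → Prop) (A : Set V) : Set V :=
  {v | v ∉ A ∧ ∃ u ∈ A, E u v}

/-- The induced subdigraph on `W` is the extended cycle `Q[X 0, …, X (k-1)]`. -/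
def ExtCycleOn (E : V → V → Prop) (k : ℕ) (X : ZMod k → Set V) (W : Set V) : Prop :=
  (⋃ i, X i) = W ∧ (∀ i j, i ≠ j → Disjoint (X i) (X j)) ∧
  (∀ i, (X i).Nonempty) ∧ (∀ i, Stable E (X i)) ∧
  (∀ u ∈ W, ∀ v ∈ W, (E u v ↔ ∃ i, u ∈ X i ∧ v ∈ X (i + 1)))

/-- The partition `(V₁,V₂,V₃)` from the structure theorem for arc-locally
in-semicomplete digraphs, with `D[V₂]` an odd extended cycle of length `k ≥ 5`. -/
def StructPartition (E : V → V → Prop) (V1 V2 V3 : Set V)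
    (k : ℕ) (X : ZMod k → Set V) : Prop :=
  V1 ∪ V2 ∪ V3 = Set.univ ∧ Disjoint V1 V2 ∧ Disjoint V1 V3 ∧ Disjoint V2 V3 ∧
  Domin E V1 V2 ∧ NoBack E V1 V3 ∧ NoBack E V2 V3 ∧
  5 ≤ k ∧ Odd k ∧ ExtCycleOn E k X V2 ∧ BipartiteOn E V3

/-- `D` contains an induced blocking odd cycle. -/
def HasInducedBlockingOddCycle (E : V → V → Prop) : Prop :=
  ∃ n : ℕ, Odd n ∧ 3 ≤ n ∧ ∃ f : ZMod n → V, Function.Injective f ∧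
    (∀ i j : ZMod n, Adj E (f i) (f j) ↔ (j = i + 1 ∨ i = j + 1)) ∧
    (∀ i, ¬ E (f i) (f 0)) ∧ (∀ i, ¬ E (f 1) (f i))

/-- Stability number of the induced subdigraph on `W`. -/
noncomputable def alphaOn (E : V → V → Prop) (W : Set V) : ℕ :=
  sSup {n | ∃ S, StableOn E W S ∧ S.ncard = n}

end Paper

open Paper in
private lemma aux_hall {V : Type*} [Fintype V] (G : SimpleGraph V)
    (A : Set V) (hhall : ∀ S ⊆ A, S.ncard ≤ (Nbhd G.Adj S).ncard) :
    ∃ f : A → V, Function.Injective f ∧ ∀ a : A, G.Adj a (f a) := by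
  classical
  have h := (Finset.all_card_le_biUnion_card_iff_exists_injective
    (fun a : A => G.neighborFinset (a : V))).mp ?_
  · obtain ⟨f, hinj, hf⟩ := h
    exact ⟨f, hinj, fun a => by simpa using hf a⟩
  intro s
  set S : Set V := Subtype.val '' (↑s : Set A) with hS
  have hScard : S.ncard = s.card := by
    rw [hS, Set.ncard_image_of_injective _ Subtype.val_injective, Set.ncard_coe_finset]
  have hsub : Nbhd G.Adj S ⊆ ↑(s.biUnion fun a : A => G.neighborFinset (a : V)) := by
    rintro v ⟨-, u, hu, hadj⟩
    obtain ⟨a, ha, rfl⟩ := hu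
    simp only [Finset.coe_biUnion, Set.mem_iUnion, Finset.mem_coe,
      SimpleGraph.mem_neighborFinset]
    exact ⟨a, by simpa using ha, hadj.elim id fun h => h.symm⟩
  calc s.card = S.ncard := hScard.symm
    _ ≤ (Nbhd G.Adj S).ncard := hhall S (by rintro v ⟨a, _, rfl⟩; exact a.2)
    _ ≤ _ := by
        rw [← Set.ncard_coe_finset]
        exact Set.ncard_le_ncard hsub (Set.toFinite _)

open Paper in
theorem stmt0 {V : Type*} [Fintype V] (G : SimpleGraph V) (X Y : Set V)
    (hpart : X ∪ Y = Set.univ) (hdisj : Disjoint X Y)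
    (hbip : ∀ u v, G.Adj u v → (u ∈ X ∧ v ∈ Y) ∨ (u ∈ Y ∧ v ∈ X))
    (hno : ¬ ∃ M : Set (V × V), MatchingBetween G.Adj X Y M ∧ Covers M X) :
    ∃ X' : Set V, X' ⊆ X ∧ X'.Nonempty ∧
      ∃ M : Set (V × V), MatchingBetween G.Adj (Nbhd G.Adj X') X' M ∧
        Covers M (Nbhd G.Adj X') := by
  classical
  have hXY : ∀ ⦃u v : V⦄, u ∈ X → G.Adj u v → v ∈ Y := by
    intro u v hu huv
    rcases hbip u v huv with ⟨_, hv⟩ | ⟨hu', _⟩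
    · exact hv
    · exact absurd hu (Set.disjoint_left.mp hdisj · hu')
  have hnXY : ∀ ⦃v : V⦄, v ∈ X → v ∉ Y := fun v hv => Set.disjoint_left.mp hdisj hv
  -- Step 1: a Hall violator exists
  have hviol : ∃ S, S ⊆ X ∧ S.Nonempty ∧ (Nbhd G.Adj S).ncard < S.ncard := by
    by_contra hc
    push_neg at hc
    have hhall : ∀ S ⊆ X, S.ncard ≤ (Nbhd G.Adj S).ncard := by
      intro S hS
      rcases S.eq_empty_or_nonempty with rfl | hne
      · simp
      · exact hc S hS hne
    obtain ⟨f, hinj, hf⟩ := aux_hall G X hhall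
    refine hno ⟨{e | ∃ a : X, e = ((a : V), f a)}, ⟨?_, ?_⟩, ?_⟩
    · rintro e ⟨a, rfl⟩
      exact ⟨a.2, hXY a.2 (hf a), hf a⟩
    · rintro e ⟨a, rfl⟩ e' ⟨b, rfl⟩ hne
      have hab : a ≠ b := fun h => hne (by rw [h])
      refine ⟨fun h => hab (Subtype.ext h), fun h => ?_, fun h => ?_, fun h => hab (hinj h)⟩
      · exact hnXY a.2 ((show (a : V) = f b from h) ▸ hXY b.2 (hf b))
      · exact hnXY b.2 ((show (b : V) = f a from h.symm) ▸ hXY a.2 (hf a))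
    · intro x hx
      exact ⟨(x, f ⟨x, hx⟩), ⟨⟨x, hx⟩, rfl⟩, Or.inl rfl⟩
  -- Step 2: take a minimal violator
  set Q : Set V → Prop := fun S => S ⊆ X ∧ S.Nonempty ∧ (Nbhd G.Adj S).ncard < S.ncard
    with hQdef
  have hne : {n | ∃ S, Q S ∧ S.ncard = n}.Nonempty := by
    obtain ⟨S, h1, h2, h3⟩ := hviol
    exact ⟨S.ncard, S, ⟨h1, h2, h3⟩, rfl⟩
  obtain ⟨X', hQX', hX'card⟩ := Nat.sInf_mem hne
  have hmin : ∀ S, Q S → X'.ncard ≤ S.ncard := by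
    intro S hS
    rw [hX'card]
    exact Nat.sInf_le ⟨S, hS, rfl⟩
  obtain ⟨hX'X, ⟨x, hx⟩, hdef⟩ := hQX'
  set A : Set V := X' \ {x} with hA
  have hAX' : A ⊆ X' := Set.diff_subset
  -- Step 3: Hall condition holds on A = X' \ {x}
  have hhallA : ∀ S ⊆ A, S.ncard ≤ (Nbhd G.Adj S).ncard := by
    intro S hSA
    by_contra hlt
    push_neg at hlt
    have hSne : S.Nonempty := by
      rcases S.eq_empty_or_nonempty with rfl | h
      · simp at hlt
      · exact h
    have hQS : Q S := ⟨(hSA.trans hAX').trans hX'X, hSne, hlt⟩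
    have h1 : S.ncard ≤ A.ncard :=
      Set.ncard_le_ncard (hSA) (Set.toFinite _)
    have h2 : A.ncard < X'.ncard :=
      Set.ncard_diff_singleton_lt_of_mem hx (Set.toFinite _)
    have := hmin S hQS
    omega
  obtain ⟨f, hinj, hf⟩ := aux_hall G A hhallA
  have hfY : ∀ a : A, f a ∈ Y := fun a => hXY (hX'X (hAX' a.2)) (hf a)
  have hrange : Set.range f ⊆ Nbhd G.Adj X' := by
    rintro v ⟨a, rfl⟩
    exact ⟨fun h => hnXY (hX'X h) (hfY a), a, hAX' a.2, Or.inl (hf a)⟩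
  have hcardA : A.ncard + 1 = X'.ncard :=
    Set.ncard_diff_singleton_add_one hx (Set.toFinite _)
  have hcardrange : (Set.range f).ncard = A.ncard := by
    rw [← Nat.card_coe_set_eq, ← Nat.card_coe_set_eq,
      Nat.card_range_of_injective hinj]
  have heq : Set.range f = Nbhd G.Adj X' := by
    apply Set.eq_of_subset_of_ncard_le hrange _ (Set.toFinite _)
    omega
  refine ⟨X', hX'X, ⟨x, hx⟩, {e | ∃ a : A, e = (f a, (a : V))}, ⟨?_, ?_⟩, ?_⟩
  · rintro e ⟨a, rfl⟩
    exact ⟨hrange ⟨a, rfl⟩, hAX' a.2, (hf a).symm⟩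
  · rintro e ⟨a, rfl⟩ e' ⟨b, rfl⟩ hne
    have hab : a ≠ b := fun h => hne (by rw [h])
    refine ⟨fun h => hab (hinj h), fun h => ?_, fun h => ?_, fun h => hab (Subtype.ext h)⟩
    · exact hnXY (hX'X (hAX' b.2)) ((show f a = (b : V) from h) ▸ hfY a)
    · exact hnXY (hX'X (hAX' a.2)) ((show f b = (a : V) from h.symm) ▸ hfY b)
  · intro v hv
    rw [← heq] at hv
    obtain ⟨a, rfl⟩ := hv
    exact ⟨(f a, (a : V)), ⟨a, rfl⟩, Or.inl rfl⟩
end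

section
/- Let D be a digraph, S a maximum stable set of D, X a stable set disjoint from S, and Y = N(X) ∩ S. Then there exists a matching between X and Y covering X. -/
open Set

section

variable {V : Type*}

theorem key_hall {V : Type*} [Fintype V] (E : V → V → Prop) {S X' : Set V}
    (hS : Paper.MaxStableOn E Set.univ S) (hX' : Paper.Stable E X') (hd : Disjoint X' S) :
    X'.ncard ≤ (Paper.Nbhd E X' ∩ S).ncard := by
  set N := Paper.Nbhd E X' with hN
  have hT : Paper.Stable E ((S \ N) ∪ X') := by
    intro u hu v hv huv hadj
    rcases hu with hu | hu <;> rcases hv with hv | hv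
    · exact hS.1.2 u hu.1 v hv.1 huv hadj
    · exact hu.2 ⟨Set.disjoint_right.mp hd hu.1, v, hv, hadj.symm⟩
    · exact hv.2 ⟨Set.disjoint_right.mp hd hv.1, u, hu, hadj⟩
    · exact hX' u hu v hv huv hadj
  have h1 : ((S \ N) ∪ X').ncard ≤ S.ncard := hS.2 _ ⟨Set.subset_univ _, hT⟩
  have h2 : ((S \ N) ∪ X').ncard = (S \ N).ncard + X'.ncard :=
    Set.ncard_union_eq (hd.symm.mono_left Set.diff_subset) (Set.toFinite _) (Set.toFinite _)
  have h3 : (S \ N).ncard + (S ∩ N).ncard = S.ncard := by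
    rw [← Set.ncard_union_eq (Set.disjoint_sdiff_left.mono_right Set.inter_subset_right)
      (Set.toFinite _) (Set.toFinite _), Set.diff_union_inter]
  have h4 : N ∩ S = S ∩ N := Set.inter_comm _ _
  rw [h4]
  omega

end

open Paper in
theorem stmt1 {V : Type*} [Fintype V] (E : V → V → Prop) (S X Y : Set V)
    (hS : MaxStableOn E Set.univ S)
    (hX : Stable E X) (hXS : Disjoint X S)
    (hY : Y = Nbhd E X ∩ S) :
    ∃ M, MatchingBetween (Adj E) X Y M ∧ Covers M X := by
  classical
  set t : X → Finset V := fun x => (Y ∩ {v | Adj E x.1 v}).toFinite.toFinset with ht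
  have hmem : ∀ (x : X) (v : V), v ∈ t x ↔ v ∈ Y ∧ Adj E x.1 v := by
    intro x v
    rw [ht, Set.Finite.mem_toFinset]
    exact Iff.rfl
  have hall : ∀ s : Finset X, s.card ≤ (s.biUnion t).card := by
    intro s
    set X' : Set V := ↑(s.image (fun x : X => x.1)) with hX'
    have hX'X : X' ⊆ X := by
      rintro v hv
      simp only [hX', Finset.coe_image, Set.mem_image, Finset.mem_coe] at hv
      obtain ⟨a, _, rfl⟩ := hv
      exact a.2
    have e1 : X'.ncard = s.card := by
      rw [hX', Set.ncard_coe_finset, Finset.card_image_of_injective s Subtype.val_injective]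
    have e2 : (↑(s.biUnion t) : Set V) = Nbhd E X' ∩ S := by
      ext v
      simp only [Finset.coe_biUnion, Set.mem_iUnion, Finset.mem_coe, Set.mem_inter_iff]
      constructor
      · rintro ⟨x, hxs, hvt⟩
        rw [hmem] at hvt
        obtain ⟨hvY, hadj⟩ := hvt
        rw [hY] at hvY
        refine ⟨⟨fun hvX' => hvY.1.1 (hX'X hvX'), x.1, ?_, hadj⟩, hvY.2⟩
        · simp only [hX', Finset.coe_image, Set.mem_image, Finset.mem_coe]
          exact ⟨x, hxs, rfl⟩
      · rintro ⟨⟨hvX', u, huX', hadj⟩, hvS⟩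
        simp only [hX', Finset.coe_image, Set.mem_image, Finset.mem_coe] at huX'
        obtain ⟨x, hxs, rfl⟩ := huX'
        refine ⟨x, hxs, ?_⟩
        rw [hmem]
        refine ⟨?_, hadj⟩
        rw [hY]
        exact ⟨⟨Set.disjoint_right.mp hXS hvS, x.1, x.2, hadj⟩, hvS⟩
    have e3 : (s.biUnion t).card = (Nbhd E X' ∩ S).ncard := by
      rw [← e2, Set.ncard_coe_finset]
    rw [← e1, e3]
    exact key_hall E hS (fun u hu v hv => hX u (hX'X hu) v (hX'X hv)) (hXS.mono_left hX'X)
  obtain ⟨f, hfinj, hf⟩ := (Finset.all_card_le_biUnion_card_iff_existsInjective' t).mp hall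
  have hfY : ∀ x, f x ∈ Y ∧ Adj E x.1 (f x) := fun x => (hmem x (f x)).mp (hf x)
  have hYS : Y ⊆ S := by rw [hY]; exact Set.inter_subset_right
  refine ⟨Set.range (fun x : X => (x.1, f x)), ⟨?_, ?_⟩, ?_⟩
  · rintro e ⟨x, rfl⟩
    exact ⟨x.2, (hfY x).1, (hfY x).2⟩
  · rintro e ⟨x, rfl⟩ g ⟨y, rfl⟩ hne
    have hxy : x ≠ y := fun h => hne (by rw [h])
    refine ⟨fun h => hxy (Subtype.val_injective h), ?_, ?_, fun h => hxy (hfinj h)⟩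
    · intro h
      simp only at h
      exact Set.disjoint_left.mp hXS x.2 (h ▸ hYS (hfY y).1)
    · intro h
      simp only at h
      exact Set.disjoint_left.mp hXS y.2 (h.symm ▸ hYS (hfY x).1)
  · intro x hx
    exact ⟨(x, f ⟨x, hx⟩), ⟨⟨x, hx⟩, rfl⟩, Or.inl rfl⟩
end

section
/- Let G be a bipartite graph with bipartition (X, Y) that has a matching covering X. Then for every proper subset Y' of Y, there exists a matching M covering X such that the restriction of M to G[X' ∪ Y'], where X' = N(Y'), is a maximum matching of G[X' ∪ Y']. -/
open Set

open Paper in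
theorem stmt2 {V : Type*} [Fintype V] (G : SimpleGraph V) (X Y : Set V)
    (hpart : X ∪ Y = Set.univ) (hdisj : Disjoint X Y)
    (hbip : ∀ u v, G.Adj u v → (u ∈ X ∧ v ∈ Y) ∨ (u ∈ Y ∧ v ∈ X))
    (hM0 : ∃ M, MatchingBetween G.Adj X Y M ∧ Covers M X) :
    ∀ Y' : Set V, Y' ⊂ Y →
      ∃ M, MatchingBetween G.Adj X Y M ∧ Covers M X ∧
        ∀ M'', MatchingBetween G.Adj (Nbhd G.Adj Y') Y' M'' →
          M''.ncard ≤ {e ∈ M | e.1 ∈ Nbhd G.Adj Y' ∧ e.2 ∈ Y'}.ncard := by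
  classical
  intro Y' hY'
  obtain ⟨M0, hM0m, hM0c⟩ := hM0
  have hY'Y : Y' ⊆ Y := hY'.subset
  have hXnY : ∀ x ∈ X, x ∉ Y := fun x hx hy => hdisj.ne_of_mem hx hy rfl
  have hNbhdX : Nbhd G.Adj Y' ⊆ X := by
    rintro v ⟨hvn, u, huY', hadj⟩
    have hGA : G.Adj u v := by
      rcases hadj with h | h
      · exact h
      · exact h.symm
    rcases hbip u v hGA with ⟨huX, _⟩ | ⟨_, hvX⟩
    · exact absurd (hY'Y huY') (hXnY u huX)
    · exact hvX
  -- the covering matching as a function m0 on X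
  have hm0ex : ∀ x ∈ X, ∃ y, (x, y) ∈ M0 := by
    intro x hx
    obtain ⟨e, heM, h⟩ := hM0c x hx
    rcases h with h | h
    · exact ⟨e.2, by rw [← h]; simpa using heM⟩
    · exact absurd ((hM0m.1 e heM).2.1) (by rw [h]; exact hXnY x hx)
  choose! m0 hm0 using hm0ex
  have hm0Y : ∀ x ∈ X, m0 x ∈ Y := fun x hx => (hM0m.1 _ (hm0 x hx)).2.1
  have hm0adj : ∀ x ∈ X, G.Adj x (m0 x) := fun x hx => (hM0m.1 _ (hm0 x hx)).2.2
  have hm0inj : ∀ x ∈ X, ∀ x' ∈ X, m0 x = m0 x' → x = x' := by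
    intro x hx x' hx' heq
    by_contra hne
    have hpair : ((x, m0 x) : V × V) ≠ (x', m0 x') := by
      intro h; exact hne (congrArg Prod.fst h)
    exact (hM0m.2 _ (hm0 x hx) _ (hm0 x' hx') hpair).2.2.2 heq
  -- a maximum matching Ms of the induced subgraph
  have hfin : {M'' : Set (V × V) | MatchingBetween G.Adj (Nbhd G.Adj Y') Y' M''}.Finite :=
    Set.toFinite _
  have hne : {M'' : Set (V × V) | MatchingBetween G.Adj (Nbhd G.Adj Y') Y' M''}.Nonempty :=
    ⟨∅, ⟨fun e he => absurd he (Set.notMem_empty e),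
      fun e he => absurd he (Set.notMem_empty e)⟩⟩
  obtain ⟨Ms, hMs, hMsmax⟩ := Set.Finite.exists_maximalFor Set.ncard _ hfin hne
  have hmax : ∀ M'', MatchingBetween G.Adj (Nbhd G.Adj Y') Y' M'' → M''.ncard ≤ Ms.ncard := by
    intro M'' h
    by_contra hlt
    push_neg at hlt
    exact absurd (hMsmax (j := M'') h hlt.le) (by omega)
  -- S : set of left endpoints of Ms ; ms : Ms as a function
  set S : Set V := Prod.fst '' Ms with hSdef
  have hmsex : ∀ s ∈ S, ∃ y, (s, y) ∈ Ms := by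
    rintro s ⟨e, heM, rfl⟩; exact ⟨e.2, heM⟩
  choose! ms hms using hmsex
  have hSX : S ⊆ X := by
    rintro s ⟨e, heM, rfl⟩; exact hNbhdX (hMs.1 e heM).1
  have hmsY' : ∀ s ∈ S, ms s ∈ Y' := fun s hs => (hMs.1 _ (hms s hs)).2.1
  have hmsadj : ∀ s ∈ S, G.Adj s (ms s) := fun s hs => (hMs.1 _ (hms s hs)).2.2
  have hmsinj : ∀ s ∈ S, ∀ s' ∈ S, ms s = ms s' → s = s' := by
    intro s hs s' hs' heq
    by_contra hne
    have hpair : ((s, ms s) : V × V) ≠ (s', ms s') := by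
      intro h; exact hne (congrArg Prod.fst h)
    exact (hMs.2 _ (hms s hs) _ (hms s' hs') hpair).2.2.2 heq
  -- alternating-path reachability
  set step : V → V → Prop := fun a b => a ∈ X ∧ b ∈ S ∧ m0 a = ms b with hstepdef
  set T : Set V := {x | ∃ x0 ∈ X \ S, Relation.ReflTransGen step x0 x} with hTdef
  have hXmS : X \ S ⊆ T := fun x hx => ⟨x, hx, Relation.ReflTransGen.refl⟩
  have hTX : T ⊆ X := by
    rintro x ⟨x0, hx0, hrtg⟩
    rcases Relation.ReflTransGen.cases_tail hrtg with h | ⟨c, _, hstep⟩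
    · rw [h]; exact hx0.1
    · exact hSX hstep.2.1
  have hTclosed : ∀ x ∈ T, ∀ b, step x b → b ∈ T := by
    rintro x ⟨x0, hx0, hrtg⟩ b hstep
    exact ⟨x0, hx0, hrtg.tail hstep⟩
  have hpredex : ∀ s, s ∈ S ∩ T → ∃ x, x ∈ T ∧ step x s := by
    rintro s ⟨hsS, x0, hx0, hrtg⟩
    rcases Relation.ReflTransGen.cases_tail hrtg with h | ⟨c, hc, hstep⟩
    · rw [h] at hsS; exact absurd hsS hx0.2
    · exact ⟨c, ⟨x0, hx0, hc⟩, hstep⟩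
  choose! pred hpredT hpredstep using hpredex
  -- the new matching as a function N
  set N : V → V := fun x => if x ∈ S \ T then ms x else m0 x with hNdef
  have hcompl : ∀ x ∈ X, x ∉ S \ T → x ∈ T := by
    intro x hx hxn
    by_cases hxS : x ∈ S
    · by_contra hxT; exact hxn ⟨hxS, hxT⟩
    · exact hXmS ⟨hx, hxS⟩
  have hNY : ∀ x ∈ X, N x ∈ Y := by
    intro x hx
    by_cases h : x ∈ S \ T
    · simp only [hNdef, if_pos h]; exact hY'Y (hmsY' x h.1)
    · simp only [hNdef, if_neg h]; exact hm0Y x hx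
  have hNadj : ∀ x ∈ X, G.Adj x (N x) := by
    intro x hx
    by_cases h : x ∈ S \ T
    · simp only [hNdef, if_pos h]; exact hmsadj x h.1
    · simp only [hNdef, if_neg h]; exact hm0adj x hx
  have hNinj : ∀ x ∈ X, ∀ x' ∈ X, N x = N x' → x = x' := by
    have key : ∀ x ∈ X, ∀ x' ∈ X, x ∈ S \ T → x' ∉ S \ T → ms x ≠ m0 x' := by
      intro x hx x' hx' hxm hx'm heq
      have hx'T : x' ∈ T := hcompl x' hx' hx'm
      have : x ∈ T := hTclosed x' hx'T x ⟨hx', hxm.1, heq.symm⟩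
      exact hxm.2 this
    intro x hx x' hx' heq
    by_cases h1 : x ∈ S \ T <;> by_cases h2 : x' ∈ S \ T
    · simp only [hNdef, if_pos h1, if_pos h2] at heq
      exact hmsinj x h1.1 x' h2.1 heq
    · simp only [hNdef, if_pos h1, if_neg h2] at heq
      exact absurd heq (key x hx x' hx' h1 h2)
    · simp only [hNdef, if_neg h1, if_pos h2] at heq
      exact absurd heq.symm (key x' hx' x hx h2 h1)
    · simp only [hNdef, if_neg h1, if_neg h2] at heq
      exact hm0inj x hx x' hx' heq
  -- the matching M
  refine ⟨(fun x => (x, N x)) '' X, ⟨?_, ?_⟩, ?_, ?_⟩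
  · rintro e ⟨x, hx, rfl⟩
    exact ⟨hx, hNY x hx, hNadj x hx⟩
  · rintro e ⟨x, hx, rfl⟩ f ⟨x', hx', rfl⟩ hne
    dsimp only at hne ⊢
    have hxx' : x ≠ x' := by rintro rfl; exact hne rfl
    refine ⟨hxx', ?_, ?_, ?_⟩
    · exact fun h => hXnY x hx (h ▸ hNY x' hx')
    · exact fun h => hXnY x' hx' (h ▸ hNY x hx)
    · exact fun h => hxx' (hNinj x hx x' hx' h)
  · intro x hx
    exact ⟨(x, N x), ⟨x, hx, rfl⟩, Or.inl rfl⟩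
  -- maximality of restriction
  · intro M'' hM''
    have h1 : M''.ncard ≤ Ms.ncard := hmax M'' hM''
    have h2 : Ms.ncard = S.ncard := by
      rw [hSdef]
      refine (Set.ncard_image_of_injOn ?_).symm
      intro e he f hf heq
      by_contra hne
      exact (hMs.2 e he f hf hne).1 heq
    -- injection from S into the restriction
    set φ : V → V := fun s => if s ∈ T then pred s else s with hφdef
    have hφmem : ∀ s ∈ S, φ s ∈ X ∧ N (φ s) ∈ Y' := by
      intro s hs
      by_cases h : s ∈ T
      · have hst : s ∈ S ∩ T := ⟨hs, h⟩
        have hpT : pred s ∈ T := hpredT s hst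
        have hpstep := hpredstep s hst
        have hpn : pred s ∉ S \ T := fun hc => hc.2 hpT
        simp only [hφdef, if_pos h, hNdef, if_neg hpn]
        exact ⟨hTX hpT, hpstep.2.2 ▸ hmsY' s hs⟩
      · have hsm : s ∈ S \ T := ⟨hs, h⟩
        simp only [hφdef, if_neg h, hNdef, if_pos hsm]
        exact ⟨hSX hs, hmsY' s hs⟩
    have hφinj : ∀ s ∈ S, ∀ s' ∈ S, φ s = φ s' → s = s' := by
      intro s hs s' hs' heq
      by_cases h1 : s ∈ T <;> by_cases h2 : s' ∈ T
      · simp only [hφdef, if_pos h1, if_pos h2] at heq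
        have e1 := (hpredstep s ⟨hs, h1⟩).2.2
        have e2 := (hpredstep s' ⟨hs', h2⟩).2.2
        rw [heq] at e1
        exact hmsinj s hs s' hs' (e1.symm.trans e2)
      · simp only [hφdef, if_pos h1, if_neg h2] at heq
        exact absurd (heq ▸ hpredT s ⟨hs, h1⟩) h2
      · simp only [hφdef, if_neg h1, if_pos h2] at heq
        exact absurd (heq ▸ hpredT s' ⟨hs', h2⟩) h1
      · simpa only [hφdef, if_neg h1, if_neg h2] using heq
    have h3 : S.ncard ≤ {e ∈ (fun x => (x, N x)) '' X |
        e.1 ∈ Nbhd G.Adj Y' ∧ e.2 ∈ Y'}.ncard := by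
      have himg : (fun s => (φ s, N (φ s))) '' S ⊆
          {e ∈ (fun x => (x, N x)) '' X | e.1 ∈ Nbhd G.Adj Y' ∧ e.2 ∈ Y'} := by
        rintro e ⟨s, hs, rfl⟩
        obtain ⟨hφX, hφY'⟩ := hφmem s hs
        refine ⟨⟨φ s, hφX, rfl⟩, ⟨?_, ⟨N (φ s), hφY', Or.inr (hNadj (φ s) hφX)⟩⟩, hφY'⟩
        intro hc
        exact hXnY (φ s) hφX (hY'Y hc)
      calc S.ncard = ((fun s => (φ s, N (φ s))) '' S).ncard := by
            refine (Set.ncard_image_of_injOn ?_).symm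
            intro s hs s' hs' heq
            exact hφinj s hs s' hs' (congrArg Prod.fst heq)
        _ ≤ _ := Set.ncard_le_ncard himg (Set.toFinite _)
    omega
end

section
/- Let D be a digraph such that every proper induced subdigraph of D satisfies the BE-property, and let S be a maximum stable set of D. If there exists no matching between S and N(S) covering S, then D has an S_BE-path partition. -/
open Set

open Paper in
theorem stmt3 {V : Type*} [Fintype V] (E : V → V → Prop) (S : Set V)
    (hind : ∀ W : Set V, W ≠ Set.univ → BEPropOn E W)
    (hS : MaxStableOn E Set.univ S)
    (hno : ¬ ∃ M, MatchingBetween (Adj E) S (Nbhd E S) M ∧ Covers M S) :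
    ∃ P, BEPartOn E Set.univ S P := by
  classical
  set nbrF : V → Finset V := fun a => Finset.univ.filter (fun v => v ∉ S ∧ Adj E a v) with hnbrF
  have hnbr_mem : ∀ a v, v ∈ nbrF a ↔ v ∉ S ∧ Adj E a v := by
    intro a v; simp [hnbrF]
  -- Step 1: Hall's condition fails
  have hfail : ∃ A : Finset V, ↑A ⊆ S ∧ (A.biUnion nbrF).card < A.card := by
    by_contra hc
    push_neg at hc
    have hall : ∀ s : Finset {x // x ∈ S}, s.card ≤ (s.biUnion (fun x => nbrF x.val)).card := by
      intro s
      have h1 : (s.image Subtype.val).card = s.card :=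
        Finset.card_image_of_injective _ Subtype.val_injective
      have h2 : (s.image Subtype.val).biUnion nbrF = s.biUnion (fun x => nbrF x.val) :=
        Finset.image_biUnion
      have h3 : ↑(s.image Subtype.val) ⊆ S := by
        intro x hx
        simp only [Finset.coe_image, Set.mem_image] at hx
        obtain ⟨y, _, rfl⟩ := hx
        exact y.2
      calc s.card = (s.image Subtype.val).card := h1.symm
        _ ≤ ((s.image Subtype.val).biUnion nbrF).card := hc _ h3
        _ = (s.biUnion (fun x => nbrF x.val)).card := by rw [h2]
    obtain ⟨f, hfinj, hfmem⟩ :=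
      (Finset.all_card_le_biUnion_card_iff_exists_injective (fun x : {x // x ∈ S} => nbrF x.val)).mp hall
    apply hno
    refine ⟨{p | ∃ h : p.1 ∈ S, p.2 = f ⟨p.1, h⟩}, ⟨?_, ?_⟩, ?_⟩
    · rintro ⟨a, b⟩ ⟨ha, hb⟩
      simp only at ha hb
      subst hb
      have := (hnbr_mem _ _).mp (hfmem ⟨a, ha⟩)
      exact ⟨ha, ⟨this.1, a, ha, this.2⟩, this.2⟩
    · rintro ⟨a, b⟩ ⟨ha, hb⟩ ⟨c, d⟩ ⟨hc', hd⟩ hne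
      simp only at ha hb hc' hd
      subst hb; subst hd
      have hac : a ≠ c := by
        rintro rfl
        exact hne rfl
      have h1 := (hnbr_mem _ _).mp (hfmem ⟨a, ha⟩)
      have h2 := (hnbr_mem _ _).mp (hfmem ⟨c, hc'⟩)
      refine ⟨hac, fun h => h2.1 (by simp only at h; exact h ▸ ha), fun h => h1.1 (by simp only at h; exact h.symm ▸ hc'), fun h => ?_⟩
      simp only at h
      exact hac (congrArg Subtype.val (hfinj h))
    · intro x hx
      exact ⟨(x, f ⟨x, hx⟩), ⟨hx, rfl⟩, Or.inl rfl⟩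
  -- Step 2: minimal counterexample
  obtain ⟨A, hAS, hAcard, hAmin⟩ : ∃ A : Finset V, ↑A ⊆ S ∧ (A.biUnion nbrF).card < A.card ∧
      ∀ B : Finset V, ↑B ⊆ S → B.card < A.card → B.card ≤ (B.biUnion nbrF).card := by
    obtain ⟨A0, h1, h2⟩ := hfail
    have hP : ∃ n, ∃ A : Finset V, ↑A ⊆ S ∧ A.card = n ∧ (A.biUnion nbrF).card < A.card :=
      ⟨A0.card, A0, h1, rfl, h2⟩
    obtain ⟨A, hA1, hA2, hA3⟩ := Nat.find_spec hP
    refine ⟨A, hA1, hA3, fun B hB1 hB2 => ?_⟩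
    by_contra hB3
    push_neg at hB3
    have hlt : B.card < Nat.find hP := hA2 ▸ hB2
    exact Nat.find_min hP hlt ⟨B, hB1, rfl, hB3⟩
  have hA0 : 0 < A.card := lt_of_le_of_lt (Nat.zero_le _) hAcard
  obtain ⟨s, hsA⟩ := Finset.card_pos.mp hA0
  -- Step 3: Hall on A.erase s
  have hallE : ∀ B : Finset {x // x ∈ A.erase s},
      B.card ≤ (B.biUnion (fun x => nbrF x.val)).card := by
    intro B
    have h1 : (B.image Subtype.val).card = B.card :=
      Finset.card_image_of_injective _ Subtype.val_injective
    have h2 : (B.image Subtype.val).biUnion nbrF = B.biUnion (fun x => nbrF x.val) :=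
      Finset.image_biUnion
    have hsub : B.image Subtype.val ⊆ A.erase s := by
      intro x hx
      simp only [Finset.mem_image] at hx
      obtain ⟨y, _, rfl⟩ := hx
      exact y.2
    have h3 : ↑(B.image Subtype.val) ⊆ S := fun x hx =>
      hAS (Finset.mem_of_mem_erase (hsub hx))
    have h4 : (B.image Subtype.val).card < A.card :=
      lt_of_le_of_lt (Finset.card_le_card hsub) (Finset.card_erase_lt_of_mem hsA)
    calc B.card = (B.image Subtype.val).card := h1.symm
      _ ≤ ((B.image Subtype.val).biUnion nbrF).card := hAmin _ h3 h4
      _ = (B.biUnion (fun x => nbrF x.val)).card := by rw [h2]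
  obtain ⟨f, hfinj, hfmem⟩ :=
    (Finset.all_card_le_biUnion_card_iff_exists_injective
      (fun x : {x // x ∈ A.erase s} => nbrF x.val)).mp hallE
  set F : V → V := fun b => if h : b ∈ A.erase s then f ⟨b, h⟩ else b with hFdef
  have hF : ∀ b (h : b ∈ A.erase s), F b = f ⟨b, h⟩ := fun b h => dif_pos h
  have hFmem : ∀ b ∈ A.erase s, F b ∈ nbrF b := fun b h => hF b h ▸ hfmem ⟨b, h⟩
  have hFinj : ∀ b ∈ A.erase s, ∀ c ∈ A.erase s, F b = F c → b = c := by
    intro b hb c hc h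
    rw [hF b hb, hF c hc] at h
    exact congrArg Subtype.val (hfinj h)
  -- surjectivity of F onto N(A)
  have himg : (A.erase s).image F = A.biUnion nbrF := by
    apply Finset.eq_of_subset_of_card_le
    · intro x hx
      simp only [Finset.mem_image] at hx
      obtain ⟨b, hb, rfl⟩ := hx
      exact Finset.mem_biUnion.mpr ⟨b, Finset.mem_of_mem_erase hb, hFmem b hb⟩
    · have hc1 : ((A.erase s).image F).card = A.card - 1 := by
        rw [Finset.card_image_of_injOn (fun b hb c hc => hFinj b hb c hc),
          Finset.card_erase_of_mem hsA]
      rw [hc1]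
      omega
  -- Step 4: the smaller digraph
  set S' : Set V := ↑A with hS'def
  set T : Set V := ↑(A.biUnion nbrF) with hTdef
  set W : Set V := Set.univ \ (S' ∪ T) with hWdef
  have hTnS : ∀ v ∈ T, v ∉ S := by
    intro v hv
    obtain ⟨a, _, hv⟩ := Finset.mem_biUnion.mp hv
    exact ((hnbr_mem _ _).mp hv).1
  have hnadj : ∀ w, w ∉ S' → w ∉ T → ∀ a ∈ S', ¬ Adj E a w := by
    intro w hw1 hw2 a ha hadj
    by_cases hwS : w ∈ S
    · exact hS.1.2 a (hAS ha) w hwS (fun h => hw1 (h ▸ ha)) hadj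
    · exact hw2 (Finset.mem_biUnion.mpr ⟨a, ha, (hnbr_mem _ _).mpr ⟨hwS, hadj⟩⟩)
  have hWne : W ≠ Set.univ := by
    intro h
    have : s ∈ W := h.symm ▸ Set.mem_univ s
    exact this.2 (Or.inl hsA)
  have hSsub : S \ S' ⊆ W := by
    intro x hx
    exact ⟨Set.mem_univ x, fun h => h.elim hx.2 (fun h' => hTnS x h' hx.1)⟩
  have hmax : MaxStableOn E W (S \ S') := by
    refine ⟨⟨hSsub, fun u hu v hv => hS.1.2 u hu.1 v hv.1⟩, ?_⟩
    intro T' hT'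
    have hdisj : Disjoint T' S' := by
      rw [Set.disjoint_left]
      intro x hx hxS'
      exact ((hT'.1 hx).2) (Or.inl hxS')
    have hstab : StableOn E Set.univ (T' ∪ S') := by
      refine ⟨Set.subset_univ _, ?_⟩
      rintro u (hu | hu) v (hv | hv) hne
      · exact hT'.2 u hu v hv hne
      · intro hadj
        exact hnadj u (fun h => (hT'.1 hu).2 (Or.inl h)) (fun h => (hT'.1 hu).2 (Or.inr h))
          v hv (Or.symm hadj)
      · intro hadj
        exact hnadj v (fun h => (hT'.1 hv).2 (Or.inl h)) (fun h => (hT'.1 hv).2 (Or.inr h))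
          u hu hadj
      · exact hS.1.2 u (hAS hu) v (hAS hv) hne
    have hcard : (T' ∪ S').ncard ≤ S.ncard := hS.2 _ hstab
    rw [Set.ncard_union_eq hdisj (Set.toFinite _) (Set.toFinite _)] at hcard
    have hdiffcard : (S \ S').ncard = S.ncard - S'.ncard :=
      Set.ncard_diff (fun x hx => hAS hx) (Set.toFinite _)
    have hle : S'.ncard ≤ S.ncard := Set.ncard_le_ncard (fun x hx => hAS hx) (Set.toFinite _)
    omega
  obtain ⟨P1, hP1⟩ := hind W hWne (S \ S') hmax
  obtain ⟨⟨⟨hP1paths, hP1nodup, hP1cov⟩, hP1orth⟩, hP1ends⟩ := hP1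
  -- Step 5: the matching paths
  set g : V → List V := fun b => if E b (F b) then [b, F b] else [F b, b] with hgdef
  have hgmem : ∀ b v, v ∈ g b ↔ v = b ∨ v = F b := by
    intro b v
    simp only [hgdef]
    split <;> simp <;> tauto
  set L : List (List V) := [s] :: ((A.erase s).toList.map g) with hLdef
  set P : List (List V) := P1 ++ L with hPdef
  have hbS : ∀ b ∈ A.erase s, b ∈ S := fun b hb => hAS (Finset.mem_of_mem_erase hb)
  have hFnS : ∀ b ∈ A.erase s, F b ∉ S := fun b hb => ((hnbr_mem _ _).mp (hFmem b hb)).1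
  have hFadj : ∀ b ∈ A.erase s, Adj E b (F b) := fun b hb => ((hnbr_mem _ _).mp (hFmem b hb)).2
  have hLflat : ∀ v, v ∈ L.flatten ↔ v ∈ S' ∪ T := by
    intro v
    simp only [hLdef, List.flatten_cons, List.mem_append, List.mem_singleton, List.mem_flatten,
      List.mem_map]
    constructor
    · rintro (rfl | ⟨l, ⟨b, hb, rfl⟩, hvl⟩)
      · exact Or.inl hsA
      · rw [Finset.mem_toList] at hb
        rcases (hgmem b v).mp hvl with rfl | rfl
        · exact Or.inl (Finset.mem_of_mem_erase hb)
        · exact Or.inr (by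
            rw [hTdef, ← himg]
            exact_mod_cast Finset.mem_image_of_mem F hb)
    · rintro (hv | hv)
      · by_cases hvs : v = s
        · exact Or.inl hvs
        · refine Or.inr ⟨g v, ⟨v, ?_, rfl⟩, (hgmem v v).mpr (Or.inl rfl)⟩
          rw [Finset.mem_toList]
          exact Finset.mem_erase.mpr ⟨hvs, hv⟩
      · rw [hTdef, ← himg] at hv
        obtain ⟨b, hb, rfl⟩ := Finset.mem_image.mp (by exact_mod_cast hv)
        exact Or.inr ⟨g b, ⟨b, Finset.mem_toList.mpr hb, rfl⟩, (hgmem b _).mpr (Or.inr rfl)⟩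
  have hLnodup : L.flatten.Nodup := by
    simp only [hLdef, List.flatten_cons]
    rw [List.singleton_append, List.nodup_cons]
    constructor
    · intro hmem
      obtain ⟨l, hl, hsl⟩ := List.mem_flatten.mp hmem
      obtain ⟨b, hb, rfl⟩ := List.mem_map.mp hl
      rw [Finset.mem_toList] at hb
      rcases (hgmem b s).mp hsl with h | h
      · exact (Finset.mem_erase.mp hb).1 h.symm
      · exact hFnS b hb (h ▸ hAS hsA)
    · rw [List.nodup_flatten]
      constructor
      · rintro l hl
        obtain ⟨b, hb, rfl⟩ := List.mem_map.mp hl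
        rw [Finset.mem_toList] at hb
        have hbne : b ≠ F b := fun h => hFnS b hb (h ▸ hbS b hb)
        simp only [hgdef]
        split <;> simp [hbne, hbne.symm]
      · rw [List.pairwise_map]
        apply List.Pairwise.imp_of_mem ?_ ((A.erase s).nodup_toList)
        intro b c hb hc hbc v hvb hvc
        rw [Finset.mem_toList] at hb hc
        rcases (hgmem b v).mp hvb with h1 | h1 <;> rcases (hgmem c v).mp hvc with h2 | h2
        · exact hbc (h1 ▸ h2 ▸ rfl)
        · exact hFnS c hc ((h1 ▸ h2 : b = F c) ▸ hbS b hb)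
        · exact hFnS b hb ((h2 ▸ h1 : c = F b) ▸ hbS c hc)
        · exact hbc (hFinj b hb c hc (h1 ▸ h2 ▸ rfl))
  have hLpaths : ∀ p ∈ L, IsPath E p := by
    intro p hp
    rcases List.mem_cons.mp hp with rfl | hp
    · exact ⟨List.cons_ne_nil _ _, List.isChain_singleton s⟩
    · obtain ⟨b, hb, rfl⟩ := List.mem_map.mp hp
      rw [Finset.mem_toList] at hb
      by_cases h : E b (F b)
      · simp only [hgdef, if_pos h]
        exact ⟨List.cons_ne_nil _ _, List.isChain_pair.mpr h⟩
      · simp only [hgdef, if_neg h]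
        refine ⟨List.cons_ne_nil _ _, List.isChain_pair.mpr ?_⟩
        rcases hFadj b hb with h2 | h2
        · exact absurd h2 h
        · exact h2
  have hmemW : ∀ p ∈ P1, ∀ v ∈ p, v ∈ W := by
    intro p hp v hv
    exact (hP1cov v).mp (List.mem_flatten.mpr ⟨p, hp, hv⟩)
  have hWiff : ∀ v ∈ W, (v ∈ S ↔ v ∈ S \ S') := by
    intro v hvW
    exact ⟨fun h => ⟨h, fun h' => hvW.2 (Or.inl h')⟩, fun h => h.1⟩
  refine ⟨P, ⟨⟨⟨?_, ?_, ?_⟩, ?_⟩, ?_⟩⟩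
  · -- paths
    intro p hp
    rcases List.mem_append.mp hp with hp | hp
    · exact hP1paths p hp
    · exact hLpaths p hp
  · -- nodup
    rw [hPdef, List.flatten_append]
    refine List.Nodup.append hP1nodup hLnodup ?_
    intro v hv1 hv2
    have hvW : v ∈ W := (hP1cov v).mp hv1
    exact hvW.2 ((hLflat v).mp hv2)
  · -- coverage
    intro v
    simp only [hPdef, List.flatten_append, List.mem_append]
    constructor
    · intro _; exact Set.mem_univ v
    · intro _
      by_cases h : v ∈ S' ∪ T
      · exact Or.inr ((hLflat v).mpr h)
      · exact Or.inl ((hP1cov v).mpr ⟨Set.mem_univ v, h⟩)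
  · -- orthogonality
    intro p hp
    rcases List.mem_append.mp hp with hp | hp
    · obtain ⟨v, ⟨hvp, hvS⟩, huniq⟩ := hP1orth p hp
      refine ⟨v, ⟨hvp, hvS.1⟩, ?_⟩
      rintro y ⟨hyp, hyS⟩
      exact huniq y ⟨hyp, (hWiff y (hmemW p hp y hyp)).mp hyS⟩
    · rcases List.mem_cons.mp hp with rfl | hp
      · exact ⟨s, ⟨List.mem_singleton_self s, hAS hsA⟩, by
          rintro y ⟨hy, _⟩
          exact List.mem_singleton.mp hy⟩
      · obtain ⟨b, hb, rfl⟩ := List.mem_map.mp hp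
        rw [Finset.mem_toList] at hb
        refine ⟨b, ⟨(hgmem b b).mpr (Or.inl rfl), hbS b hb⟩, ?_⟩
        rintro y ⟨hy, hyS⟩
        rcases (hgmem b y).mp hy with rfl | rfl
        · rfl
        · exact absurd hyS (hFnS b hb)
  · -- endpoints
    intro p hp v hv hvS
    rcases List.mem_append.mp hp with hp | hp
    · exact hP1ends p hp v hv ((hWiff v (hmemW p hp v hv)).mp hvS)
    · rcases List.mem_cons.mp hp with rfl | hp
      · left
        rw [List.mem_singleton.mp hv]
        rfl
      · obtain ⟨b, hb, rfl⟩ := List.mem_map.mp hp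
        rw [Finset.mem_toList] at hb
        have hvb : v = b := by
          rcases (hgmem b v).mp hv with rfl | rfl
          · rfl
          · exact absurd hvS (hFnS b hb)
        subst hvb
        by_cases h : E v (F v)
        · left; simp only [hgdef, if_pos h]; rfl
        · right; simp only [hgdef, if_neg h]; rfl
end

section
/- Let D be a digraph such that every proper induced subdigraph of D satisfies the α-property, and let S be a maximum stable set of D. If there is no matching between S and N(S) covering S, then D has an S-path partition. -/
open Set

private lemma hallMatch {V : Type*} [Fintype V] (X Y : Set V) (R : V → V → Prop)
    (hall : ∀ T ⊆ X, T.ncard ≤ {y | y ∈ Y ∧ ∃ x ∈ T, R x y}.ncard) :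
    ∃ f : V → V, Set.InjOn f X ∧ ∀ x ∈ X, f x ∈ Y ∧ R x (f x) := by
  classical
  let t : X → Finset V := fun x => {y | y ∈ Y ∧ R x.1 y}.toFinset
  have ht : ∀ s : Finset X, s.card ≤ (s.biUnion t).card := by
    intro s
    have h1 : ((s.image Subtype.val : Finset V) : Set V) ⊆ X := by
      intro y hy
      simp only [Finset.coe_image, Set.mem_image] at hy
      obtain ⟨x, -, rfl⟩ := hy
      exact x.2
    have h2 := hall _ h1
    have h3 : {y | y ∈ Y ∧ ∃ x ∈ ((s.image Subtype.val : Finset V) : Set V), R x y}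
        = ((s.biUnion t : Finset V) : Set V) := by
      ext y
      simp only [Set.mem_setOf_eq, Finset.coe_image, Set.mem_image, Finset.coe_biUnion,
        Set.mem_iUnion, Set.mem_toFinset, Finset.mem_coe, t]
      constructor
      · rintro ⟨hy, x, ⟨a, ha, rfl⟩, hR⟩
        exact ⟨a, ha, hy, hR⟩
      · rintro ⟨a, ha, hy, hR⟩
        exact ⟨hy, a.1, ⟨a, ha, rfl⟩, hR⟩
    rw [h3, Set.ncard_coe_finset, Set.ncard_coe_finset,
      Finset.card_image_of_injective _ Subtype.val_injective] at h2
    exact h2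
  obtain ⟨f, hf, hft⟩ := (Finset.all_card_le_biUnion_card_iff_exists_injective t).mp ht
  refine ⟨fun v => if h : v ∈ X then f ⟨v, h⟩ else v, ?_, ?_⟩
  · intro a ha b hb hab
    simp only [dif_pos ha, dif_pos hb] at hab
    exact congrArg Subtype.val (hf hab)
  · intro x hx
    simp only [dif_pos hx]
    have := hft ⟨x, hx⟩
    rw [Set.mem_toFinset] at this
    exact this

open Paper in
theorem stmt4 {V : Type*} [Fintype V] (E : V → V → Prop) (S : Set V)
    (hind : ∀ W : Set V, W ≠ Set.univ → AlphaPropOn E W)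
    (hS : MaxStableOn E Set.univ S)
    (hno : ¬ ∃ M, MatchingBetween (Adj E) S (Nbhd E S) M ∧ Covers M S) :
    ∃ P, SPartOn E Set.univ S P := by
  classical
  have hstab : Stable E S := hS.1.2
  -- neighborhoods of subsets of S avoid S
  have hNS : ∀ T, T ⊆ S → ∀ v, v ∈ Nbhd E T → v ∉ S := by
    rintro T hTS v ⟨hvT, u, huT, hadj⟩ hvS
    exact hstab u (hTS huT) v hvS (fun h => hvT (h ▸ huT)) hadj
  -- Step 1: a Hall-violating subset exists
  have hviol : ∃ S', S' ⊆ S ∧ S'.Nonempty ∧ (Nbhd E S').ncard < S'.ncard := by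
    by_contra hc
    push_neg at hc
    apply hno
    have hall : ∀ T ⊆ S, T.ncard ≤ {y | y ∈ Nbhd E S ∧ ∃ x ∈ T, Adj E x y}.ncard := by
      intro T hT
      rcases T.eq_empty_or_nonempty with rfl | hTne
      · simp
      refine (hc T hT hTne).trans (Set.ncard_le_ncard ?_ (Set.toFinite _))
      rintro v ⟨hvT, u, huT, hadj⟩
      have hvS : v ∉ S := hNS T hT v ⟨hvT, u, huT, hadj⟩
      exact ⟨⟨hvS, u, hT huT, hadj⟩, u, huT, hadj⟩
    obtain ⟨f, hfi, hfm⟩ := hallMatch S (Nbhd E S) (Adj E) hall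
    refine ⟨(fun s => (s, f s)) '' S, ⟨?_, ?_⟩, ?_⟩
    · rintro e ⟨s, hs, rfl⟩
      exact ⟨hs, (hfm s hs).1, (hfm s hs).2⟩
    · rintro e ⟨s, hs, rfl⟩ e' ⟨s', hs', rfl⟩ hne
      have hss' : s ≠ s' := fun h => hne (by rw [h])
      refine ⟨hss', ?_, ?_, fun h => hss' (hfi hs hs' h)⟩
      · intro h
        have h' : s = f s' := h
        exact ((hfm s' hs').1).1 (h' ▸ hs)
      · intro h
        have h' : f s = s' := h
        exact ((hfm s hs).1).1 (h' ▸ hs')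
    · intro x hx
      exact ⟨(x, f x), ⟨x, hx, rfl⟩, Or.inl rfl⟩
  -- Step 2: minimal violating subset
  have hex : ∃ n, ∃ S', S' ⊆ S ∧ S'.Nonempty ∧ (Nbhd E S').ncard < S'.ncard ∧ S'.ncard = n := by
    obtain ⟨S', h1, h2, h3⟩ := hviol
    exact ⟨S'.ncard, S', h1, h2, h3, rfl⟩
  obtain ⟨S', hS'S, hS'ne, hS'lt, hS'card⟩ := Nat.find_spec hex
  have hmin : ∀ T, T ⊆ S → T.Nonempty → (Nbhd E T).ncard < T.ncard → S'.ncard ≤ T.ncard := by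
    intro T h1 h2 h3
    rw [hS'card]
    exact Nat.find_le ⟨T, h1, h2, h3, rfl⟩
  -- Step 3: Hall condition from the N(S') side
  have hall2 : ∀ T ⊆ Nbhd E S', T.ncard ≤ {s | s ∈ S' ∧ ∃ v ∈ T, Adj E s v}.ncard := by
    intro T hT
    by_contra hcon
    push_neg at hcon
    set B := {s | s ∈ S' ∧ ∃ v ∈ T, Adj E s v} with hB
    have hTne : T.Nonempty := by
      rcases T.eq_empty_or_nonempty with rfl | h
      · simp at hcon
      · exact h
    obtain ⟨v0, hv0⟩ := hTne
    obtain ⟨hv0N, u0, hu0S', hadj0⟩ := hT hv0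
    have hBne : B.Nonempty := ⟨u0, hu0S', v0, hv0, hadj0⟩
    have hBsub : B ⊆ S' := fun s hs => hs.1
    have hsub2 : Nbhd E (S' \ B) ⊆ (Nbhd E S') \ T := by
      rintro y ⟨hyn, u, ⟨huS', huB⟩, hadj⟩
      constructor
      · refine ⟨?_, u, huS', hadj⟩
        intro hyS'
        have hne : u ≠ y := fun h => hyn ⟨h ▸ huS', h ▸ huB⟩
        exact hstab u (hS'S huS') y (hS'S hyS') hne hadj
      · intro hyT
        exact huB ⟨huS', y, hyT, hadj⟩
    have hBle : B.ncard ≤ S'.ncard := Set.ncard_le_ncard hBsub (Set.toFinite _)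
    have e1 : (S' \ B).ncard = S'.ncard - B.ncard := Set.ncard_diff hBsub (Set.toFinite _)
    have hTle : T.ncard ≤ (Nbhd E S').ncard := Set.ncard_le_ncard hT (Set.toFinite _)
    have e2 : ((Nbhd E S') \ T).ncard = (Nbhd E S').ncard - T.ncard :=
      Set.ncard_diff hT (Set.toFinite _)
    have h3 : (Nbhd E (S' \ B)).ncard ≤ ((Nbhd E S') \ T).ncard :=
      Set.ncard_le_ncard hsub2 (Set.toFinite _)
    have hB1 : 0 < B.ncard := (Set.ncard_pos (Set.toFinite _)).mpr hBne
    have hne'' : (S' \ B).Nonempty := by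
      refine (Set.ncard_pos (Set.toFinite _)).mp ?_
      omega
    have hviol'' : (Nbhd E (S' \ B)).ncard < (S' \ B).ncard := by omega
    have := hmin (S' \ B) (Set.diff_subset.trans hS'S) hne'' hviol''
    omega
  obtain ⟨g, hgi, hgm⟩ := hallMatch (Nbhd E S') S' (fun v s => Adj E s v) hall2
  -- Step 4: apply the induction hypothesis on W
  set W := Set.univ \ (S' ∪ Nbhd E S') with hWdef
  obtain ⟨s0, hs0⟩ := hS'ne
  have hWne : W ≠ Set.univ := by
    intro h
    have hs0W : s0 ∈ W := h ▸ Set.mem_univ s0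
    exact hs0W.2 (Or.inl hs0)
  have hNS' : ∀ v, v ∈ Nbhd E S' → v ∉ S := hNS S' hS'S
  have hdisjW : S \ S' ⊆ W := by
    intro x hx
    refine ⟨Set.mem_univ x, ?_⟩
    rintro (h | h)
    · exact hx.2 h
    · exact hNS' x h hx.1
  have hmax : MaxStableOn E W (S \ S') := by
    refine ⟨⟨hdisjW, fun u hu v hv => hstab u hu.1 v hv.1⟩, ?_⟩
    rintro T ⟨hTW, hTst⟩
    have key : ∀ a b, a ∈ T → b ∈ S' → Adj E a b → False := by
      intro a b ha hb hab
      exact (hTW ha).2 (Or.inr ⟨fun h => (hTW ha).2 (Or.inl h), b, hb, Or.symm hab⟩)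
    have hstu : Stable E (T ∪ S') := by
      rintro u (hu | hu) v (hv | hv) hne hadj
      · exact hTst u hu v hv hne hadj
      · exact key u v hu hv hadj
      · exact key v u hv hu (Or.symm hadj)
      · exact hstab u (hS'S hu) v (hS'S hv) hne hadj
    have hd : Disjoint T S' := Set.disjoint_left.mpr fun x hxT hxS' => (hTW hxT).2 (Or.inl hxS')
    have h1 := hS.2 (T ∪ S') ⟨Set.subset_univ _, hstu⟩
    rw [Set.ncard_union_eq hd (Set.toFinite _) (Set.toFinite _)] at h1
    have h2 : (S \ S').ncard = S.ncard - S'.ncard := Set.ncard_diff hS'S (Set.toFinite _)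
    have h3 : S'.ncard ≤ S.ncard := Set.ncard_le_ncard hS'S (Set.toFinite _)
    omega
  obtain ⟨P', ⟨⟨hP'path, hP'nodup, hP'mem⟩, hP'orth⟩⟩ := hind W hWne (S \ S') hmax
  -- Step 5: build the new short paths
  set pathFor : V → List V := fun s =>
    if h : ∃ v, v ∈ Nbhd E S' ∧ g v = s then
      (if E s h.choose then [s, h.choose] else [h.choose, s])
    else [s] with hpf
  have hcases : ∀ s,
      ((¬ ∃ v, v ∈ Nbhd E S' ∧ g v = s) ∧ pathFor s = [s]) ∨
      (∃ v, v ∈ Nbhd E S' ∧ g v = s ∧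
        ((pathFor s = [s, v] ∧ E s v) ∨ (pathFor s = [v, s] ∧ E v s))) := by
    intro s
    by_cases h : ∃ v, v ∈ Nbhd E S' ∧ g v = s
    · right
      obtain ⟨hvN, hgv⟩ := h.choose_spec
      have hadj : Adj E s h.choose := by
        have h2 := (hgm h.choose hvN).2
        rw [hgv] at h2
        exact h2
      by_cases hE : E s h.choose
      · exact ⟨h.choose, hvN, hgv, Or.inl ⟨by rw [hpf]; simp only []; rw [dif_pos h, if_pos hE], hE⟩⟩
      · exact ⟨h.choose, hvN, hgv, Or.inr ⟨by rw [hpf]; simp only []; rw [dif_pos h, if_neg hE],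
          hadj.resolve_left hE⟩⟩
    · left
      exact ⟨h, by rw [hpf]; simp only []; rw [dif_neg h]⟩
  have hmem : ∀ s, s ∈ S' → ∀ x, x ∈ pathFor s ↔ (x = s ∨ (x ∈ Nbhd E S' ∧ g x = s)) := by
    intro s hs x
    rcases hcases s with ⟨hno', hc⟩ | ⟨v, hvN, hgv, hc⟩
    · rw [hc]
      simp only [List.mem_singleton]
      constructor
      · exact Or.inl
      · rintro (rfl | ⟨hxN, hgx⟩)
        · rfl
        · exact absurd ⟨x, hxN, hgx⟩ hno'
    · have hxv : x ∈ pathFor s ↔ x = s ∨ x = v := by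
        rcases hc with ⟨hc, -⟩ | ⟨hc, -⟩ <;> rw [hc] <;> simp [or_comm]
      rw [hxv]
      constructor
      · rintro (rfl | rfl)
        · exact Or.inl rfl
        · exact Or.inr ⟨hvN, hgv⟩
      · rintro (rfl | ⟨hxN, hgx⟩)
        · exact Or.inl rfl
        · exact Or.inr (hgi hxN hvN (hgx.trans hgv.symm))
  set L := (Set.toFinite S').toFinset.toList with hLdef
  have hLnodup : L.Nodup := Finset.nodup_toList _
  have hLmem : ∀ s, s ∈ L ↔ s ∈ S' := by
    intro s
    rw [hLdef, Finset.mem_toList, Set.Finite.mem_toFinset]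
  have hflat2 : ∀ x, x ∈ (L.map pathFor).flatten ↔ x ∈ S' ∪ Nbhd E S' := by
    intro x
    rw [List.mem_flatten]
    constructor
    · rintro ⟨p, hp, hxp⟩
      rw [List.mem_map] at hp
      obtain ⟨s, hsL, rfl⟩ := hp
      rcases (hmem s ((hLmem s).mp hsL) x).mp hxp with rfl | ⟨hxN, -⟩
      · exact Or.inl ((hLmem x).mp hsL)
      · exact Or.inr hxN
    · rintro (hx | hx)
      · exact ⟨pathFor x, List.mem_map_of_mem ((hLmem x).mpr hx),
          (hmem x hx x).mpr (Or.inl rfl)⟩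
      · exact ⟨pathFor (g x), List.mem_map_of_mem ((hLmem _).mpr (hgm x hx).1),
          (hmem _ (hgm x hx).1 x).mpr (Or.inr ⟨hx, rfl⟩)⟩
  refine ⟨P' ++ L.map pathFor, ⟨⟨?_, ?_, ?_⟩, ?_⟩⟩
  · -- all are paths
    intro p hp
    rw [List.mem_append] at hp
    rcases hp with hp | hp
    · exact hP'path p hp
    · rw [List.mem_map] at hp
      obtain ⟨s, hsL, rfl⟩ := hp
      rcases hcases s with ⟨-, hc⟩ | ⟨v, -, -, ⟨hc, hE⟩ | ⟨hc, hE⟩⟩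
      · rw [hc]
        exact ⟨by simp, List.isChain_singleton s⟩
      · rw [hc]
        exact ⟨by simp, List.isChain_pair.mpr hE⟩
      · rw [hc]
        exact ⟨by simp, List.isChain_pair.mpr hE⟩
  · -- nodup
    rw [List.flatten_append, List.nodup_append]
    refine ⟨hP'nodup, ?_, ?_⟩
    · rw [List.nodup_flatten]
      constructor
      · intro l hl
        rw [List.mem_map] at hl
        obtain ⟨s, hsL, rfl⟩ := hl
        have hsS' : s ∈ S' := (hLmem s).mp hsL
        rcases hcases s with ⟨-, hc⟩ | ⟨v, hvN, -, ⟨hc, -⟩ | ⟨hc, -⟩⟩ <;> rw [hc] <;>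
          simp <;> intro h <;> exact hvN.1 (h ▸ hsS')
      · rw [List.pairwise_map]
        refine hLnodup.imp_of_mem ?_
        intro a b ha hb hne x hxa hxb
        have haS' : a ∈ S' := (hLmem a).mp ha
        have hbS' : b ∈ S' := (hLmem b).mp hb
        rcases (hmem a haS' x).mp hxa with rfl | ⟨hxN, hgx⟩
        · rcases (hmem b hbS' x).mp hxb with rfl | ⟨hxN, -⟩
          · exact hne rfl
          · exact hxN.1 haS'
        · rcases (hmem b hbS' x).mp hxb with rfl | ⟨-, hgx'⟩
          · exact hxN.1 hbS'
          · exact hne (hgx ▸ hgx')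
    · intro x hx y hx2 hxy
      subst hxy
      exact ((hP'mem x).mp hx).2 ((hflat2 x).mp hx2)
  · -- covers univ
    intro v
    rw [List.flatten_append, List.mem_append]
    simp only [Set.mem_univ, iff_true]
    by_cases hv : v ∈ S' ∪ Nbhd E S'
    · exact Or.inr ((hflat2 v).mpr hv)
    · exact Or.inl ((hP'mem v).mpr ⟨Set.mem_univ v, hv⟩)
  · -- orthogonality
    intro p hp
    rw [List.mem_append] at hp
    rcases hp with hp | hp
    · obtain ⟨v, ⟨hvp, hvS⟩, huniq⟩ := hP'orth p hp
      refine ⟨v, ⟨hvp, hvS.1⟩, ?_⟩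
      rintro y ⟨hyp, hyS⟩
      have hyW : y ∈ W := (hP'mem y).mp (List.mem_flatten.mpr ⟨p, hp, hyp⟩)
      exact huniq y ⟨hyp, hyS, fun h => hyW.2 (Or.inl h)⟩
    · rw [List.mem_map] at hp
      obtain ⟨s, hsL, rfl⟩ := hp
      have hsS' : s ∈ S' := (hLmem s).mp hsL
      refine ⟨s, ⟨(hmem s hsS' s).mpr (Or.inl rfl), hS'S hsS'⟩, ?_⟩
      rintro y ⟨hyp, hyS⟩
      rcases (hmem s hsS' y).mp hyp with rfl | ⟨hyN, -⟩
      · rfl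
      · exact absurd hyS (hNS' y hyN)
end

section
/- Let D be a digraph such that every proper induced subdigraph of D satisfies the BE-property. If α(D) ≥ |V(D)|/2, then D satisfies the BE-property. -/
open Set

section Stmt6Aux

open Paper

variable {V : Type*} [Fintype V]

private lemma adjSymm' {E : V → V → Prop} {u v : V} (h : Adj E u v) : Adj E v u :=
  h.symm

open Classical in
private noncomputable def NFn (E : V → V → Prop) (I : Finset V) : Finset V :=
  Finset.univ.filter (fun v => v ∉ I ∧ ∃ u ∈ I, Adj E u v)

private lemma NFn_mem {E : V → V → Prop} {I : Finset V} {v : V} :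
    v ∈ NFn E I ↔ (v ∉ I ∧ ∃ u ∈ I, Adj E u v) := by
  classical
  simp [NFn]

/-- Independence for finsets. -/
private def Indep (E : V → V → Prop) (I : Finset V) : Prop :=
  ∀ u ∈ I, ∀ v ∈ I, u ≠ v → ¬ Adj E u v

/-- The critical difference function. -/
private noncomputable def phiZ (E : V → V → Prop) (I : Finset V) : ℤ :=
  (I.card : ℤ) - ((NFn E I).card : ℤ)

private lemma NFn_empty {E : V → V → Prop} : NFn E (∅ : Finset V) = ∅ := by
  ext v
  simp [NFn_mem]

/-- Assembly: given a single path `q` containing exactly one vertex of `S`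
(at an end), whose vertex set meets every maximum stable set, we obtain a
`BE`-partition of the whole digraph from a `BE`-partition of `V ∖ q`. -/
private lemma assemble {E : V → V → Prop} {S : Set V}
    (hind : ∀ W : Set V, W ≠ Set.univ → BEPropOn E W)
    (hS : MaxStableOn E Set.univ S) (q : List V) (s₀ : V)
    (hqpath : IsPath E q) (hqnd : q.Nodup)
    (hs₀q : s₀ ∈ q) (hs₀S : s₀ ∈ S)
    (hend : q.head? = some s₀ ∨ q.getLast? = some s₀)
    (honly : ∀ v ∈ q, v ∈ S → v = s₀)
    (htight : ∀ T : Set V, StableOn E Set.univ T → T.ncard = S.ncard →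
      ∃ x ∈ T, x ∈ q) :
    ∃ P, BEPartOn E Set.univ S P := by
  classical
  set W : Set V := Set.univ \ {v | v ∈ q} with hWdef
  have hWne : W ≠ Set.univ := by
    intro h
    have hmem : s₀ ∈ W := h ▸ Set.mem_univ s₀
    exact hmem.2 hs₀q
  have hcard' : (S \ {s₀}).ncard = S.ncard - 1 :=
    Set.ncard_diff_singleton_of_mem hs₀S
  have hmax : MaxStableOn E W (S \ {s₀}) := by
    refine ⟨⟨?_, ?_⟩, ?_⟩
    · intro v hv
      refine ⟨Set.mem_univ v, ?_⟩
      intro hvq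
      exact hv.2 (honly v hvq hv.1)
    · intro u hu v hv hne
      exact hS.1.2 u hu.1 v hv.1 hne
    · intro T hT
      have hTuniv : StableOn E Set.univ T := ⟨Set.subset_univ T, hT.2⟩
      have hle : T.ncard ≤ S.ncard := hS.2 T hTuniv
      have hne' : T.ncard ≠ S.ncard := by
        intro h
        obtain ⟨x, hxT, hxq⟩ := htight T hTuniv h
        exact (hT.1 hxT).2 hxq
      rw [hcard']
      omega
  obtain ⟨P, hP⟩ := hind W hWne (S \ {s₀}) hmax
  obtain ⟨⟨⟨hPpaths, hPnd, hPcov⟩, hPorth⟩, hPBE⟩ := hP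
  have hmemW : ∀ p ∈ P, ∀ v ∈ p, v ∈ W := by
    intro p hp v hvp
    exact (hPcov v).mp (List.mem_flatten.mpr ⟨p, hp, hvp⟩)
  refine ⟨q :: P, ⟨⟨?_, ?_, ?_⟩, ?_⟩, ?_⟩
  · intro p hp
    rcases List.mem_cons.mp hp with rfl | hp
    · exact hqpath
    · exact hPpaths p hp
  · rw [List.flatten_cons, List.nodup_append]
    refine ⟨hqnd, hPnd, ?_⟩
    intro a haq b haP hab
    subst hab
    exact ((hPcov a).mp haP).2 haq
  · intro v
    rw [List.flatten_cons, List.mem_append]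
    constructor
    · intro _
      exact Set.mem_univ v
    · intro _
      by_cases hvq : v ∈ q
      · exact Or.inl hvq
      · exact Or.inr ((hPcov v).mpr ⟨Set.mem_univ v, hvq⟩)
  · intro p hp
    rcases List.mem_cons.mp hp with rfl | hp
    · refine ⟨s₀, ⟨hs₀q, hs₀S⟩, ?_⟩
      rintro v ⟨hvq, hvS⟩
      exact honly v hvq hvS
    · obtain ⟨w, ⟨hwp, hwS'⟩, huniq⟩ := hPorth p hp
      refine ⟨w, ⟨hwp, hwS'.1⟩, ?_⟩
      rintro v ⟨hvp, hvS⟩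
      have hvW : v ∈ W := hmemW p hp v hvp
      refine huniq v ⟨hvp, hvS, ?_⟩
      intro h
      rw [Set.mem_singleton_iff] at h
      subst h
      exact hvW.2 hs₀q
  · intro p hp v hvp hvS
    rcases List.mem_cons.mp hp with rfl | hp
    · have hv := honly v hvp hvS
      subst hv
      exact hend
    · have hvW : v ∈ W := hmemW p hp v hvp
      refine hPBE p hp v hvp ⟨hvS, ?_⟩
      intro h
      rw [Set.mem_singleton_iff] at h
      subst h
      exact hvW.2 hs₀q

/-- The key combinatorial lemma: either some vertex of `S` belongs to every
maximum stable set, or some edge `{s₀, u₀}` with `s₀ ∈ S`, `u₀ ∉ S` meets every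
maximum stable set. -/
private lemma key {E : V → V → Prop} {S : Set V}
    (hS : MaxStableOn E Set.univ S)
    (hcard : Fintype.card V ≤ 2 * S.ncard) (hne : Nonempty V) :
    (∃ s₀ ∈ S, ∀ T : Set V, StableOn E Set.univ T → T.ncard = S.ncard → s₀ ∈ T) ∨
    (∃ s₀ u₀, s₀ ∈ S ∧ u₀ ∉ S ∧ Adj E s₀ u₀ ∧
      ∀ T : Set V, StableOn E Set.univ T → T.ncard = S.ncard → (s₀ ∈ T ∨ u₀ ∈ T)) := by
  classical
  set n := Fintype.card V with hn
  set k := S.ncard with hk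
  set Sf : Finset V := S.toFinset with hSf
  have hSfmem : ∀ v, v ∈ Sf ↔ v ∈ S := by
    intro v
    rw [hSf, Set.mem_toFinset]
  have hSfcard : Sf.card = k := by
    rw [hSf, hk, Set.ncard_eq_toFinset_card']
  -- any independent finset has card at most k
  have hbound : ∀ J : Finset V, Indep E J → J.card ≤ k := by
    intro J hJ
    have hst : StableOn E Set.univ (↑J : Set V) := by
      refine ⟨Set.subset_univ _, ?_⟩
      intro u hu v hv hne'
      exact hJ u (Finset.mem_coe.mp hu) v (Finset.mem_coe.mp hv) hne'
    have := hS.2 _ hst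
    rwa [Set.ncard_coe_finset] at this
  set C : Finset (Finset V) := Finset.univ.filter (fun I => Indep E I) with hC
  have hemptyC : (∅ : Finset V) ∈ C := by
    refine Finset.mem_filter.mpr ⟨Finset.mem_univ _, ?_⟩
    intro u hu
    exact absurd hu (Finset.notMem_empty u)
  have hCne : (C.image (phiZ E)).Nonempty := ⟨phiZ E ∅, Finset.mem_image_of_mem _ hemptyC⟩
  set d : ℤ := (C.image (phiZ E)).max' hCne with hd
  have hdle : ∀ I : Finset V, Indep E I → phiZ E I ≤ d := by
    intro I hI
    exact Finset.le_max' _ _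
      (Finset.mem_image_of_mem _ (Finset.mem_filter.mpr ⟨Finset.mem_univ _, hI⟩))
  have hphiempty : phiZ E (∅ : Finset V) = 0 := by
    rw [phiZ, NFn_empty]
    simp
  have hd0 : 0 ≤ d := by
    have h := hdle ∅ (fun u hu => absurd hu (Finset.notMem_empty u))
    rw [hphiempty] at h
    exact h
  have hindepSf : Indep E Sf := by
    intro u hu v hv hne'
    exact hS.1.2 u ((hSfmem u).mp hu) v ((hSfmem v).mp hv) hne'
  have hkn : k ≤ n := by
    rw [← hSfcard, hn, ← Finset.card_univ]
    exact Finset.card_le_card (Finset.subset_univ _)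
  have hNFSfcard : (NFn E Sf).card ≤ n - k := by
    have hsub : NFn E Sf ⊆ Finset.univ \ Sf := by
      intro v hv
      rw [NFn_mem] at hv
      exact Finset.mem_sdiff.mpr ⟨Finset.mem_univ _, hv.1⟩
    have := Finset.card_le_card hsub
    rwa [Finset.card_sdiff_of_subset (Finset.subset_univ _), Finset.card_univ, hSfcard, ← hn] at this
  have hdlarge : (k : ℤ) - ((n : ℤ) - (k : ℤ)) ≤ d := by
    have h1 := hdle Sf hindepSf
    rw [phiZ, hSfcard] at h1
    have h2 : ((NFn E Sf).card : ℤ) ≤ (n : ℤ) - (k : ℤ) := by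
      have := hNFSfcard
      omega
    omega
  rcases lt_or_ge 0 d with hdpos | hdnonpos
  · -- case d ≥ 1 : take a minimum critical independent set; it lies in every
    -- maximum stable set.
    set D : Finset (Finset V) := C.filter (fun I => phiZ E I = d) with hD
    have hDne : D.Nonempty := by
      obtain ⟨I, hI, hphiI⟩ := Finset.mem_image.mp ((C.image (phiZ E)).max'_mem hCne)
      exact ⟨I, Finset.mem_filter.mpr ⟨hI, hphiI⟩⟩
    obtain ⟨I₀, hI₀D, hI₀min⟩ := Finset.exists_min_image D Finset.card hDne
    have hI₀indep : Indep E I₀ := (Finset.mem_filter.mp (Finset.mem_filter.mp hI₀D).1).2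
    have hphiI₀ : phiZ E I₀ = d := (Finset.mem_filter.mp hI₀D).2
    have hI₀ne : I₀.Nonempty := by
      rcases Finset.eq_empty_or_nonempty I₀ with h | h
      · exfalso
        rw [h, hphiempty] at hphiI₀
        omega
      · exact h
    obtain ⟨s₀, hs₀I₀⟩ := hI₀ne
    have hcore : ∀ T : Set V, StableOn E Set.univ T → T.ncard = k → ∀ x ∈ I₀, x ∈ T := by
      intro T hT hTk x hxI₀
      by_contra hxT
      set Tf : Finset V := T.toFinset with hTf
      have hTmem : ∀ v, v ∈ Tf ↔ v ∈ T := by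
        intro v
        rw [hTf, Set.mem_toFinset]
      have hTfcard : Tf.card = k := by
        rw [hTf, ← Set.ncard_eq_toFinset_card', hTk]
      have hTstab : ∀ u ∈ Tf, ∀ v ∈ Tf, u ≠ v → ¬ Adj E u v := by
        intro u hu v hv hne'
        exact hT.2 u ((hTmem u).mp hu) v ((hTmem v).mp hv) hne'
      -- exchange inequality
      have hexch : (I₀ \ Tf).card ≤ (Tf ∩ NFn E I₀).card := by
        set J : Finset V := (Tf \ NFn E I₀) ∪ I₀ with hJ
        have hJstable : Indep E J := by
          intro u hu v hv huv hadj
          rw [hJ, Finset.mem_union, Finset.mem_sdiff] at hu hv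
          rcases hu with ⟨huT, huN⟩ | huI
          · rcases hv with ⟨hvT, hvN⟩ | hvI
            · exact hTstab u huT v hvT huv hadj
            · by_cases huI' : u ∈ I₀
              · exact hI₀indep u huI' v hvI huv hadj
              · exact huN (NFn_mem.mpr ⟨huI', v, hvI, adjSymm' hadj⟩)
          · rcases hv with ⟨hvT, hvN⟩ | hvI
            · by_cases hvI' : v ∈ I₀
              · exact hI₀indep u huI v hvI' huv hadj
              · exact hvN (NFn_mem.mpr ⟨hvI', u, huI, hadj⟩)
            · exact hI₀indep u huI v hvI huv hadj
        have hJcard : J.card ≤ k := hbound J hJstable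
        have hsub : (Tf \ NFn E I₀) ∪ (I₀ \ Tf) ⊆ J := by
          intro y hy
          rw [Finset.mem_union] at hy
          rw [hJ, Finset.mem_union]
          rcases hy with h | h
          · exact Or.inl h
          · exact Or.inr (Finset.mem_sdiff.mp h).1
        have hdisj : Disjoint (Tf \ NFn E I₀) (I₀ \ Tf) := by
          rw [Finset.disjoint_left]
          intro a ha hb
          exact (Finset.mem_sdiff.mp hb).2 (Finset.mem_sdiff.mp ha).1
        have h1 : (Tf \ NFn E I₀).card + (I₀ \ Tf).card ≤ k := by
          calc (Tf \ NFn E I₀).card + (I₀ \ Tf).card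
              = ((Tf \ NFn E I₀) ∪ (I₀ \ Tf)).card := (Finset.card_union_of_disjoint hdisj).symm
            _ ≤ J.card := Finset.card_le_card hsub
            _ ≤ k := hJcard
        have h2 : (Tf ∩ NFn E I₀).card + (Tf \ NFn E I₀).card = k := by
          rw [Finset.card_inter_add_card_sdiff, hTfcard]
        omega
      set I' : Finset V := I₀ ∩ Tf with hI'
      have hI'indep : Indep E I' := by
        intro u hu v hv h
        exact hI₀indep u (Finset.mem_of_mem_inter_left hu) v (Finset.mem_of_mem_inter_left hv) h
      have hI'lt : I'.card < I₀.card := by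
        apply Finset.card_lt_card
        rw [hI', Finset.ssubset_iff_of_subset Finset.inter_subset_left]
        refine ⟨x, hxI₀, ?_⟩
        intro hxI'
        exact hxT ((hTmem x).mp (Finset.mem_of_mem_inter_right hxI'))
      have hphiI' : phiZ E I' ≤ d - 1 := by
        have h1 := hdle I' hI'indep
        rcases lt_or_eq_of_le h1 with h | h
        · omega
        · exfalso
          have hmem : I' ∈ D :=
            Finset.mem_filter.mpr ⟨Finset.mem_filter.mpr ⟨Finset.mem_univ _, hI'indep⟩, h⟩
          have := hI₀min I' hmem
          omega
      have hNFsub : NFn E I' ⊆ NFn E I₀ \ Tf := by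
        intro v hv
        rw [NFn_mem] at hv
        obtain ⟨hvI', u, huI', hadj⟩ := hv
        have huI₀ : u ∈ I₀ := Finset.mem_of_mem_inter_left huI'
        have huTf : u ∈ Tf := Finset.mem_of_mem_inter_right huI'
        have huv : u ≠ v := by
          intro h
          exact hvI' (h ▸ huI')
        have hvI₀ : v ∉ I₀ := by
          intro hvI₀
          exact hI₀indep u huI₀ v hvI₀ huv hadj
        have hvTf : v ∉ Tf := by
          intro hvTf
          exact hTstab u huTf v hvTf huv hadj
        exact Finset.mem_sdiff.mpr ⟨NFn_mem.mpr ⟨hvI₀, u, huI₀, hadj⟩, hvTf⟩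
      have c1 : I'.card + (I₀ \ Tf).card = I₀.card := by
        rw [hI']
        exact Finset.card_inter_add_card_sdiff I₀ Tf
      have c3 : (NFn E I').card + (Tf ∩ NFn E I₀).card ≤ (NFn E I₀).card := by
        have h1 : (NFn E I').card ≤ (NFn E I₀ \ Tf).card := Finset.card_le_card hNFsub
        have h2 : (NFn E I₀ ∩ Tf).card + (NFn E I₀ \ Tf).card = (NFn E I₀).card :=
          Finset.card_inter_add_card_sdiff _ _
        have h3 : (NFn E I₀ ∩ Tf).card = (Tf ∩ NFn E I₀).card := by
          rw [Finset.inter_comm]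
        omega
      rw [phiZ] at hphiI₀ hphiI'
      omega
    refine Or.inl ⟨s₀, ?_, ?_⟩
    · exact hcore S hS.1 hk.symm s₀ hs₀I₀
    · intro T hT hTk
      exact hcore T hT hTk s₀ hs₀I₀
  · -- case d = 0 : Hall's condition, perfect matching between S and its complement
    have h2kn : n = 2 * k := by
      have h1 : (k : ℤ) - ((n : ℤ) - (k : ℤ)) ≤ 0 := le_trans hdlarge hdnonpos
      have h2 : n ≤ 2 * k := hcard
      omega
    have hkpos : 0 < k := by
      have : 0 < n := hn ▸ Fintype.card_pos
      omega
    set Uf : Finset V := Sfᶜ with hUf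
    have hUfmem : ∀ v, v ∈ Uf ↔ v ∉ S := by
      intro v
      rw [hUf, Finset.mem_compl, hSfmem]
    have hUfcard : Uf.card = k := by
      rw [hUf, Finset.card_compl, hSfcard, ← hn]
      omega
    set t : {x // x ∈ Sf} → Finset V := fun s => Uf.filter (fun v => Adj E ↑s v) with ht
    have hHall : ∀ s' : Finset {x // x ∈ Sf}, s'.card ≤ (s'.biUnion t).card := by
      intro s'
      set A : Finset V := s'.image Subtype.val with hA
      have hAcard : A.card = s'.card := Finset.card_image_of_injective s' Subtype.val_injective
      have hAS : A ⊆ Sf := by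
        intro a ha
        obtain ⟨y, _, rfl⟩ := Finset.mem_image.mp ha
        exact y.2
      have hAindep : Indep E A := by
        intro u hu v hv h
        exact hindepSf u (hAS hu) v (hAS hv) h
      have hAle : A.card ≤ (NFn E A).card := by
        have h1 := hdle A hAindep
        rw [phiZ] at h1
        have h2 : phiZ E A ≤ 0 := by
          rw [phiZ]
          omega
        omega
      have hNFA : NFn E A ⊆ s'.biUnion t := by
        intro v hv
        rw [NFn_mem] at hv
        obtain ⟨hvA, u, huA, hadj⟩ := hv
        obtain ⟨xu, hxu, rfl⟩ := Finset.mem_image.mp huA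
        have hvU : v ∈ Uf := by
          rw [hUfmem]
          intro hvS
          have hvSf : v ∈ Sf := (hSfmem v).mpr hvS
          have hnev : (↑xu : V) ≠ v := by
            intro h
            exact hvA (h ▸ Finset.mem_image_of_mem _ hxu)
          exact hindepSf (↑xu) xu.2 v hvSf hnev hadj
        exact Finset.mem_biUnion.mpr ⟨xu, hxu, Finset.mem_filter.mpr ⟨hvU, hadj⟩⟩
      calc s'.card = A.card := hAcard.symm
        _ ≤ (NFn E A).card := hAle
        _ ≤ (s'.biUnion t).card := Finset.card_le_card hNFA
    obtain ⟨f, hfinj, hft⟩ := (Finset.all_card_le_biUnion_card_iff_exists_injective t).mp hHall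
    have hfU : ∀ x : {x // x ∈ Sf}, f x ∈ Uf := fun x => (Finset.mem_filter.mp (hft x)).1
    have hfadj : ∀ x : {x // x ∈ Sf}, Adj E (↑x : V) (f x) := fun x => (Finset.mem_filter.mp (hft x)).2
    have hSfne : Sf.Nonempty := by
      rw [← Finset.card_pos, hSfcard]
      exact hkpos
    obtain ⟨s₀, hs₀Sf⟩ := hSfne
    haveI hnesub : Nonempty {x // x ∈ Sf} := ⟨⟨s₀, hs₀Sf⟩⟩
    have himg : (Finset.univ.image f) = Uf := by
      apply Finset.eq_of_subset_of_card_le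
      · intro v hv
        obtain ⟨y, _, rfl⟩ := Finset.mem_image.mp hv
        exact hfU y
      · rw [hUfcard, Finset.card_image_of_injective _ hfinj, Finset.card_univ,
          Fintype.card_coe, hSfcard]
    have hsurj : ∀ v ∈ Uf, ∃ x, f x = v := by
      intro v hv
      obtain ⟨y, _, h⟩ := Finset.mem_image.mp (himg ▸ hv)
      exact ⟨y, h⟩
    set x₀ : {x // x ∈ Sf} := ⟨s₀, hs₀Sf⟩ with hx₀
    set u₀ : V := f x₀ with hu₀
    refine Or.inr ⟨s₀, u₀, (hSfmem s₀).mp hs₀Sf, (hUfmem u₀).mp (hfU x₀), hfadj x₀, ?_⟩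
    intro T hT hTk
    by_contra hcon
    push_neg at hcon
    obtain ⟨hs₀T, hu₀T⟩ := hcon
    set Tf : Finset V := T.toFinset with hTf
    have hTmem : ∀ v, v ∈ Tf ↔ v ∈ T := by
      intro v
      rw [hTf, Set.mem_toFinset]
    have hTfcard : Tf.card = k := by
      rw [hTf, ← Set.ncard_eq_toFinset_card', hTk, hk]
    set F : V → V := fun w => if w ∈ Sf then w else ↑(Function.invFun f w) with hF
    have hinvf : ∀ w ∈ Tf, w ∉ Sf → f (Function.invFun f w) = w := by
      intro w _ hwS
      have hwU : w ∈ Uf := by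
        rw [hUfmem]
        intro hwS'
        exact hwS ((hSfmem w).mpr hwS')
      obtain ⟨y, hy⟩ := hsurj w hwU
      exact Function.invFun_eq ⟨y, hy⟩
    have hFmem : ∀ w ∈ Tf, F w ∈ Sf.erase s₀ := by
      intro w hw
      rw [Finset.mem_erase]
      by_cases hwS : w ∈ Sf
      · rw [hF]
        simp only [if_pos hwS]
        refine ⟨?_, hwS⟩
        intro h
        exact hs₀T (h ▸ (hTmem w).mp hw)
      · have hinv := hinvf w hw hwS
        rw [hF]
        simp only [if_neg hwS]
        refine ⟨?_, (Function.invFun f w).2⟩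
        intro h
        have hxeq : Function.invFun f w = x₀ := Subtype.ext h
        have hwu : w = u₀ := by
          rw [hu₀, ← hxeq, hinv]
        exact hu₀T (hwu ▸ (hTmem w).mp hw)
    have hFinj : Set.InjOn F ↑Tf := by
      intro w₁ hw₁ w₂ hw₂ heq
      rw [Finset.mem_coe] at hw₁ hw₂
      by_cases h1 : w₁ ∈ Sf <;> by_cases h2 : w₂ ∈ Sf
      · rw [hF] at heq
        simpa [if_pos h1, if_pos h2] using heq
      · exfalso
        have hinv := hinvf w₂ hw₂ h2
        rw [hF] at heq
        simp only [if_pos h1, if_neg h2] at heq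
        have hadj : Adj E w₁ w₂ := by
          have h := hfadj (Function.invFun f w₂)
          rw [hinv, ← heq] at h
          exact h
        have hne12 : w₁ ≠ w₂ := by
          intro h
          exact h2 (h ▸ h1)
        exact hT.2 w₁ ((hTmem _).mp hw₁) w₂ ((hTmem _).mp hw₂) hne12 hadj
      · exfalso
        have hinv := hinvf w₁ hw₁ h1
        rw [hF] at heq
        simp only [if_neg h1, if_pos h2] at heq
        have hadj : Adj E w₂ w₁ := by
          have h := hfadj (Function.invFun f w₁)
          rw [hinv, heq] at h
          exact h
        have hne12 : w₂ ≠ w₁ := by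
          intro h
          exact h1 (h ▸ h2)
        exact hT.2 w₂ ((hTmem _).mp hw₂) w₁ ((hTmem _).mp hw₁) hne12 hadj
      · rw [hF] at heq
        simp only [if_neg h1, if_neg h2] at heq
        have hinv1 := hinvf w₁ hw₁ h1
        have hinv2 := hinvf w₂ hw₂ h2
        have : Function.invFun f w₁ = Function.invFun f w₂ := Subtype.ext heq
        rw [← hinv1, ← hinv2, this]
    have hcard2 : Tf.card ≤ (Sf.erase s₀).card :=
      Finset.card_le_card_of_injOn F hFmem hFinj
    rw [hTfcard, Finset.card_erase_of_mem hs₀Sf, hSfcard] at hcard2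
    omega

end Stmt6Aux

open Paper in
theorem stmt6 {V : Type*} [Fintype V] (E : V → V → Prop)
    (hind : ∀ W : Set V, W ≠ Set.univ → BEPropOn E W)
    (halpha : ∃ S : Set V, StableOn E Set.univ S ∧ Fintype.card V ≤ 2 * S.ncard) :
    BEPropOn E Set.univ := by
  classical
  intro S hS
  obtain ⟨S₀, hS₀, hc₀⟩ := halpha
  have hkcard : Fintype.card V ≤ 2 * S.ncard := by
    have h1 := hS.2 S₀ hS₀
    omega
  rcases isEmpty_or_nonempty V with hV | hV
  · refine ⟨[], ⟨⟨?_, ?_, ?_⟩, ?_⟩, ?_⟩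
    · intro p hp
      exact absurd hp List.not_mem_nil
    · simp
    · intro v
      exact isEmptyElim v
    · intro p hp
      exact absurd hp List.not_mem_nil
    · intro p hp
      exact absurd hp List.not_mem_nil
  · rcases key hS hkcard hV with ⟨s₀, hs₀S, hcore⟩ | ⟨s₀, u₀, hs₀S, hu₀S, hadj, htight⟩
    · refine assemble hind hS [s₀] s₀ ⟨List.cons_ne_nil _ _, List.isChain_singleton _⟩
        (List.nodup_singleton _) (List.mem_singleton_self _) hs₀S (Or.inl rfl) ?_ ?_
      · intro v hv _
        exact List.mem_singleton.mp hv
      · intro T hT hTk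
        exact ⟨s₀, hcore T hT hTk, List.mem_singleton_self _⟩
    · have hnesu : s₀ ≠ u₀ := by
        intro h
        exact hu₀S (h ▸ hs₀S)
      rcases hadj with hE1 | hE2
      · refine assemble hind hS [s₀, u₀] s₀ ⟨List.cons_ne_nil _ _, ?_⟩ ?_
          (List.mem_cons_self) hs₀S (Or.inl rfl) ?_ ?_
        · exact List.isChain_pair.mpr hE1
        · simp [hnesu]
        · intro v hv hvS
          rcases List.mem_cons.mp hv with rfl | hv
          · rfl
          · rw [List.mem_singleton] at hv
            subst hv
            exact absurd hvS hu₀S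
        · intro T hT hTk
          rcases htight T hT hTk with h | h
          · exact ⟨s₀, h, List.mem_cons_self⟩
          · exact ⟨u₀, h, by simp⟩
      · refine assemble hind hS [u₀, s₀] s₀ ⟨List.cons_ne_nil _ _, ?_⟩ ?_
          (by simp) hs₀S (Or.inr ?_) ?_ ?_
        · exact List.isChain_pair.mpr hE2
        · simp [Ne.symm hnesu]
        · simp
        · intro v hv hvS
          rcases List.mem_cons.mp hv with rfl | hv
          · exact absurd hvS hu₀S
          · rw [List.mem_singleton] at hv
            exact hv
        · intro T hT hTk
          rcases htight T hT hTk with h | h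
          · exact ⟨s₀, h, by simp⟩
          · exact ⟨u₀, h, List.mem_cons_self⟩
end

section
/- Let D be a digraph such that every proper induced subdigraph of D satisfies the α-property. If α(D) ≥ |V(D)|/2, then D satisfies the α-property. -/
open Set

open Paper in
theorem stmt7 {V : Type*} [Fintype V] (E : V → V → Prop)
    (hind : ∀ W : Set V, W ≠ Set.univ → AlphaPropOn E W)
    (halpha : ∃ S : Set V, StableOn E Set.univ S ∧ Fintype.card V ≤ 2 * S.ncard) :
    AlphaPropOn E Set.univ := by
  classical
  intro S hS
  obtain ⟨⟨hSsub, hSstab⟩, hSmax⟩ := hS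
  have L1 : ∀ T : Set V, Stable E T → T.ncard ≤ S.ncard := by
    intro T hT; exact hSmax T ⟨Set.subset_univ T, hT⟩
  -- Finsets
  set Sf : Finset V := Set.Finite.toFinset (Set.toFinite S) with hSfdef
  have memSf : ∀ x, x ∈ Sf ↔ x ∈ S := by
    intro x; rw [hSfdef]; exact Set.Finite.mem_toFinset _
  have hSncard : S.ncard = Sf.card := by
    rw [hSfdef]; exact Set.ncard_eq_toFinset_card _ _
  set Rf : Finset V := Sfᶜ with hRfdef
  have memRf : ∀ x, x ∈ Rf ↔ x ∉ S := by
    intro x; rw [hRfdef, Finset.mem_compl, memSf]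
  set NS : Finset V → Finset V := fun B => Sf.filter (fun u => ∃ v ∈ B, Adj E v u) with hNSdef
  have memNS : ∀ B u, u ∈ NS B ↔ u ∈ Sf ∧ ∃ v ∈ B, Adj E v u := by
    intro B u; simp only [hNSdef, Finset.mem_filter]
  have NSsub : ∀ B, NS B ⊆ Sf := fun B u hu => ((memNS B u).1 hu).1
  have hNSempty : NS ∅ = ∅ := by
    ext u; simp [memNS]
  have hNSunion : ∀ B C, NS (B ∪ C) = NS B ∪ NS C := by
    intro B C; ext u
    simp only [memNS, Finset.mem_union]
    constructor
    · rintro ⟨h1, v, (hv | hv), h2⟩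
      · exact Or.inl ⟨h1, v, hv, h2⟩
      · exact Or.inr ⟨h1, v, hv, h2⟩
    · rintro (⟨h1, v, hv, h2⟩ | ⟨h1, v, hv, h2⟩)
      · exact ⟨h1, v, Or.inl hv, h2⟩
      · exact ⟨h1, v, Or.inr hv, h2⟩
  have hRcard : Rf.card ≤ Sf.card := by
    have h1 : Rf.card = Fintype.card V - Sf.card := by
      rw [hRfdef]; exact Finset.card_compl Sf
    have h2 : Sf.card ≤ Fintype.card V := Finset.card_le_univ Sf
    obtain ⟨S₀, hS₀stab, hS₀card⟩ := halpha
    have h3 := L1 S₀ hS₀stab.2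
    omega
  -- choose A maximizing deficiency (tie-break: minimal card)
  obtain ⟨A, hApow, hAopt⟩ := Finset.exists_max_image Rf.powerset
    (fun B => ((Rf.card : ℤ) + 1) * ((B.card : ℤ) - ((NS B).card : ℤ)) - (B.card : ℤ))
    ⟨∅, Finset.empty_mem_powerset Rf⟩
  have hAsub : A ⊆ Rf := Finset.mem_powerset.1 hApow
  have hdmax : ∀ B, B ⊆ Rf →
      (B.card : ℤ) - ((NS B).card : ℤ) ≤ (A.card : ℤ) - ((NS A).card : ℤ) := by
    intro B hB
    by_contra hcon
    push_neg at hcon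
    have h1 : (A.card : ℤ) - ((NS A).card : ℤ) + 1 ≤ (B.card : ℤ) - ((NS B).card : ℤ) := hcon
    have h2 := hAopt B (Finset.mem_powerset.2 hB)
    have hBR : (B.card : ℤ) ≤ (Rf.card : ℤ) := by
      exact_mod_cast Finset.card_le_card hB
    have hA0 : (0 : ℤ) ≤ (A.card : ℤ) := by positivity
    have hR0 : (0 : ℤ) ≤ (Rf.card : ℤ) + 1 := by positivity
    nlinarith
  have hdmin : A ≠ ∅ → 1 ≤ (A.card : ℤ) - ((NS A).card : ℤ) := by
    intro hA
    have h2 := hAopt ∅ (Finset.empty_mem_powerset Rf)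
    simp only [hNSempty, Finset.card_empty] at h2
    by_contra hcon
    push_neg at hcon
    have h3 : (A.card : ℤ) - ((NS A).card : ℤ) ≤ 0 := by omega
    have hR0 : (0 : ℤ) ≤ (Rf.card : ℤ) + 1 := by positivity
    push_cast at h2
    have h6 : (0:ℤ) ≤ ((Rf.card:ℤ)+1) * (0 - ((A.card:ℤ) - ((NS A).card:ℤ))) := by
      apply mul_nonneg hR0; omega
    have h4 : (A.card : ℤ) ≤ 0 := by nlinarith [h2, h6]
    have h5 : A.card = 0 := by omega
    exact hA (Finset.card_eq_zero.1 h5)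
  have hNSsubS : (↑(NS A) : Set V) ⊆ S := by
    intro x hx; exact (memSf x).1 (NSsub A hx)
  -- key bound : NS A is maximum stable on A ∪ NS A
  have L4 : ∀ T : Set V, T ⊆ (↑(A ∪ NS A) : Set V) → Stable E T → T.ncard ≤ (NS A).card := by
    intro T hTsub hTstab
    have hTA : ∀ t ∈ T, t ∈ A ∨ t ∈ NS A := by
      intro t ht
      have := hTsub ht
      rw [Finset.coe_union] at this
      exact this
    have hdisj : Disjoint (S \ (↑(NS A) : Set V)) T := by
      rw [Set.disjoint_left]
      intro x hx hxT
      rcases hTA x hxT with h | h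
      · exact (memRf x).1 (hAsub h) hx.1
      · exact hx.2 h
    have hstabU : Stable E ((S \ (↑(NS A) : Set V)) ∪ T) := by
      intro u hu v hv huv hadj
      rcases hu with hu | hu <;> rcases hv with hv | hv
      · exact hSstab u hu.1 v hv.1 huv hadj
      · rcases hTA v hv with h | h
        · exact hu.2 ((memNS A u).2 ⟨(memSf u).2 hu.1, ⟨v, h, Or.symm hadj⟩⟩)
        · exact hSstab u hu.1 v ((memSf v).1 (NSsub A h)) huv hadj
      · rcases hTA u hu with h | h
        · exact hv.2 ((memNS A v).2 ⟨(memSf v).2 hv.1, ⟨u, h, hadj⟩⟩)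
        · exact hSstab u ((memSf u).1 (NSsub A h)) v hv.1 huv hadj
      · exact hTstab u hu v hv huv hadj
    have hUcard := L1 _ hstabU
    have hUeq : ((S \ (↑(NS A) : Set V)) ∪ T).ncard
        = (S \ (↑(NS A) : Set V)).ncard + T.ncard :=
      Set.ncard_union_eq hdisj (Set.toFinite _) (Set.toFinite _)
    have hdiff : (S \ (↑(NS A) : Set V)).ncard = S.ncard - (NS A).card := by
      rw [Set.ncard_diff hNSsubS, Set.ncard_coe_finset]
    have hle : (NS A).card ≤ S.ncard := by
      rw [hSncard]; exact Finset.card_le_card (NSsub A)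
    omega
  -- partition of A ∪ NS A
  have hPW : ∃ P_W : List (List V), (∀ p ∈ P_W, IsPath E p) ∧ P_W.flatten.Nodup ∧
      (∀ v, v ∈ P_W.flatten ↔ (v ∈ A ∨ v ∈ NS A)) ∧
      (∀ p ∈ P_W, ∃! v, v ∈ p ∧ v ∈ NS A) := by
    by_cases hA : A = ∅
    · refine ⟨[], by simp, by simp, ?_, by simp⟩
      intro v
      simp [hA, hNSempty]
    · have hz : ∃ z, z ∉ A ∪ NS A := by
        by_cases hAR : A = Rf
        · have hd1 := hdmin hA
          have h1 : (NS A).card + 1 ≤ A.card := by omega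
          have h2 : (NS A).card < Sf.card := by
            have : A.card ≤ Rf.card := Finset.card_le_card hAsub
            omega
          have h3 : (Sf \ NS A).Nonempty := by
            rw [← Finset.card_pos, Finset.card_sdiff_of_subset (NSsub A)]
            omega
          obtain ⟨z, hzmem⟩ := h3
          rw [Finset.mem_sdiff] at hzmem
          refine ⟨z, fun hmem => ?_⟩
          rcases Finset.mem_union.1 hmem with h | h
          · rw [hAR] at h
            exact (memRf z).1 h ((memSf z).1 hzmem.1)
          · exact hzmem.2 h
        · obtain ⟨z, hzR, hzA⟩ := Finset.exists_of_ssubset (hAsub.ssubset_of_ne hAR)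
          refine ⟨z, fun hmem => ?_⟩
          rcases Finset.mem_union.1 hmem with h | h
          · exact hzA h
          · exact (memRf z).1 hzR ((memSf z).1 (NSsub A h))
      obtain ⟨z, hz⟩ := hz
      have hproper : (↑(A ∪ NS A) : Set V) ≠ Set.univ := by
        intro heq
        have : z ∈ (↑(A ∪ NS A) : Set V) := heq ▸ Set.mem_univ z
        exact hz this
      have hmaxNS : MaxStableOn E (↑(A ∪ NS A)) (↑(NS A)) := by
        refine ⟨⟨?_, ?_⟩, ?_⟩
        · intro x hx
          rw [Finset.mem_coe] at hx
          exact Finset.mem_coe.2 (Finset.mem_union_right _ hx)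
        · intro u hu v hv huv hadj
          exact hSstab u (hNSsubS hu) v (hNSsubS hv) huv hadj
        · intro T hT
          rw [Set.ncard_coe_finset]
          exact L4 T hT.1 hT.2
      obtain ⟨P, hP⟩ := hind _ hproper _ hmaxNS
      refine ⟨P, hP.1.1, hP.1.2.1, ?_, ?_⟩
      · intro v
        rw [hP.1.2.2 v, Finset.mem_coe, Finset.mem_union]
      · intro p hp
        obtain ⟨u, hu, huniq⟩ := hP.2 p hp
        exact ⟨u, ⟨hu.1, hu.2⟩, fun y hy => huniq y ⟨hy.1, hy.2⟩⟩
  obtain ⟨P_W, hPW1, hPW2, hPW3, hPW4⟩ := hPW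
  -- Hall matching from Rf \ A into Sf \ NS A
  set RA : Finset V := Rf \ A with hRAdef
  have hHall : ∃ f : {x // x ∈ RA} → V, Function.Injective f ∧
      ∀ x, (f x ∈ Sf ∧ f x ∉ NS A) ∧ Adj E (↑x) (f x) := by
    set t : {x // x ∈ RA} → Finset V :=
      fun x => (Sf \ NS A).filter (fun u => Adj E (↑x) u) with htdef
    have hcond : ∀ s : Finset {x // x ∈ RA}, s.card ≤ (s.biUnion t).card := by
      intro s
      set B : Finset V := s.image Subtype.val with hBdef
      have hBcard : B.card = s.card := Finset.card_image_of_injective s Subtype.val_injective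
      have hBsub : B ⊆ RA := by
        intro x hx
        rw [hBdef] at hx
        obtain ⟨y, _, rfl⟩ := Finset.mem_image.1 hx
        exact y.2
      have hBRf : B ⊆ Rf := fun x hx => (Finset.mem_sdiff.1 (hRAdef ▸ hBsub hx)).1
      have hBA : Disjoint A B := by
        rw [Finset.disjoint_right]
        intro x hx
        exact (Finset.mem_sdiff.1 (hRAdef ▸ hBsub hx)).2
      have hsubB : NS B \ NS A ⊆ s.biUnion t := by
        intro u hu
        rw [Finset.mem_sdiff] at hu
        obtain ⟨hu1, hu2⟩ := hu
        obtain ⟨huS, v, hvB, hadj⟩ := (memNS B u).1 hu1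
        rw [hBdef] at hvB
        obtain ⟨y, hy, rfl⟩ := Finset.mem_image.1 hvB
        refine Finset.mem_biUnion.2 ⟨y, hy, ?_⟩
        rw [htdef]
        exact Finset.mem_filter.2 ⟨Finset.mem_sdiff.2 ⟨huS, hu2⟩, hadj⟩
      have h1 := hdmax (A ∪ B) (Finset.union_subset hAsub hBRf)
      have h2 : (A ∪ B).card = A.card + B.card := Finset.card_union_of_disjoint hBA
      have h3 : NS (A ∪ B) = NS A ∪ NS B := hNSunion A B
      have h4 : (NS A ∪ NS B).card = (NS A).card + (NS B \ NS A).card := by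
        rw [← Finset.union_sdiff_self_eq_union]
        exact Finset.card_union_of_disjoint Finset.disjoint_sdiff
      rw [h3, h2, h4] at h1
      have h5 : B.card ≤ (NS B \ NS A).card := by
        push_cast at h1
        omega
      calc s.card = B.card := hBcard.symm
        _ ≤ (NS B \ NS A).card := h5
        _ ≤ (s.biUnion t).card := Finset.card_le_card hsubB
    obtain ⟨f, hfinj, hf⟩ := (Finset.all_card_le_biUnion_card_iff_existsInjective' t).1 hcond
    refine ⟨f, hfinj, fun x => ?_⟩
    have hfx := hf x
    simp only [htdef] at hfx
    have := Finset.mem_filter.1 hfx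
    exact ⟨Finset.mem_sdiff.1 this.1, this.2⟩
  obtain ⟨f, hfinj, hf⟩ := hHall
  have hfS : ∀ x, f x ∈ Sf := fun x => (hf x).1.1
  have hfN : ∀ x, f x ∉ NS A := fun x => (hf x).1.2
  have hfadj : ∀ x : {x // x ∈ RA}, Adj E (↑x) (f x) := fun x => (hf x).2
  have hRAnotS : ∀ x : {x // x ∈ RA}, (↑x : V) ∉ S := by
    intro x
    have h : (↑x : V) ∈ Rf \ A := by rw [← hRAdef]; exact x.2
    exact (memRf _).1 (Finset.mem_sdiff.1 h).1
  have hRAnotA : ∀ x : {x // x ∈ RA}, (↑x : V) ∉ A := by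
    intro x
    have h : (↑x : V) ∈ Rf \ A := by rw [← hRAdef]; exact x.2
    exact (Finset.mem_sdiff.1 h).2
  have hne : ∀ x : {x // x ∈ RA}, (↑x : V) ≠ f x := by
    intro x h
    exact hRAnotS x ((memSf _).1 (h ▸ hfS x))
  -- assembling the partition
  set IM : Finset V := RA.attach.image f with hIMdef
  set US : Finset V := (Sf \ NS A) \ IM with hUSdef
  set gp : {x // x ∈ RA} → List V :=
    fun x => if E (f x) (↑x) then [f x, ↑x] else [↑x, f x] with hgpdef
  set pairs : List (List V) := RA.attach.toList.map gp with hpairsdef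
  set singles : List (List V) := US.toList.map (fun u => [u]) with hsinglesdef
  have hgpmem : ∀ x v, v ∈ gp x ↔ (v = ↑x ∨ v = f x) := by
    intro x v
    simp only [hgpdef]
    split_ifs <;> simp [or_comm]
  have hpairsmem : ∀ v, v ∈ pairs.flatten ↔ (v ∈ RA ∨ v ∈ IM) := by
    intro v
    rw [hpairsdef]
    simp only [List.mem_flatten, List.mem_map]
    constructor
    · rintro ⟨l, ⟨x, hx, rfl⟩, hv⟩
      rcases (hgpmem x v).1 hv with rfl | rfl
      · exact Or.inl x.2
      · refine Or.inr ?_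
        rw [hIMdef]
        exact Finset.mem_image.2 ⟨x, Finset.mem_attach _ _, rfl⟩
    · rintro (hv | hv)
      · exact ⟨gp ⟨v, hv⟩, ⟨⟨v, hv⟩, by simp [Finset.mem_toList], rfl⟩,
          (hgpmem _ v).2 (Or.inl rfl)⟩
      · rw [hIMdef] at hv
        obtain ⟨x, _, rfl⟩ := Finset.mem_image.1 hv
        exact ⟨gp x, ⟨x, by simp [Finset.mem_toList], rfl⟩, (hgpmem x _).2 (Or.inr rfl)⟩
  have hsinglesmem : ∀ v, v ∈ singles.flatten ↔ v ∈ US := by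
    intro v
    rw [hsinglesdef]
    simp [List.mem_flatten, List.mem_map, Finset.mem_toList]
  have hUSfacts : ∀ v, v ∈ US → v ∈ Sf ∧ v ∉ NS A ∧ v ∉ IM := by
    intro v hv
    rw [hUSdef, Finset.mem_sdiff, Finset.mem_sdiff] at hv
    exact ⟨hv.1.1, hv.1.2, hv.2⟩
  have hIMfacts : ∀ v, v ∈ IM → v ∈ Sf ∧ v ∉ NS A := by
    intro v hv
    rw [hIMdef] at hv
    obtain ⟨x, _, rfl⟩ := Finset.mem_image.1 hv
    exact ⟨hfS x, hfN x⟩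
  have hRAfacts : ∀ v, v ∈ RA → v ∉ S ∧ v ∉ A := by
    intro v hv
    exact ⟨hRAnotS ⟨v, hv⟩, hRAnotA ⟨v, hv⟩⟩
  refine ⟨P_W ++ (pairs ++ singles), ⟨⟨?_, ?_, ?_⟩, ?_⟩⟩
  · -- IsPath
    intro p hp
    rcases List.mem_append.1 hp with hp | hp
    · exact hPW1 p hp
    rcases List.mem_append.1 hp with hp | hp
    · rw [hpairsdef] at hp
      obtain ⟨x, _, rfl⟩ := List.mem_map.1 hp
      constructor
      · simp only [hgpdef]
        split_ifs <;> simp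
      · simp only [hgpdef]
        split_ifs with h
        · simp [List.Chain', List.isChain_cons_cons, h]
        · rcases hfadj x with h2 | h2
          · simp [List.Chain', List.isChain_cons_cons, h2]
          · exact absurd h2 h
    · rw [hsinglesdef] at hp
      obtain ⟨u, _, rfl⟩ := List.mem_map.1 hp
      exact ⟨by simp, List.isChain_singleton u⟩
  · -- Nodup
    rw [List.flatten_append, List.flatten_append, List.nodup_append, List.nodup_append]
    refine ⟨hPW2, ⟨?_, ?_, ?_⟩, ?_⟩
    · -- pairs flatten nodup
      rw [hpairsdef]
      rw [List.nodup_flatten]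
      constructor
      · intro l hl
        obtain ⟨x, _, rfl⟩ := List.mem_map.1 hl
        simp only [hgpdef]
        split_ifs <;> simp [hne x, (hne x).symm]
      · rw [List.pairwise_map]
        have hnd : RA.attach.toList.Nodup := Finset.nodup_toList _
        refine List.Pairwise.imp ?_ hnd
        intro x y hxy v hvx hvy
        rcases (hgpmem x v).1 hvx with rfl | rfl <;>
          rcases (hgpmem y _).1 hvy with h | h
        · exact hxy (Subtype.coe_injective h)
        · exact hRAnotS x ((memSf _).1 (h ▸ hfS y))
        · exact hRAnotS y ((memSf _).1 (h.symm ▸ hfS x))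
        · exact hxy (hfinj h)
    · -- singles flatten nodup
      rw [hsinglesdef, List.nodup_flatten]
      constructor
      · intro l hl
        obtain ⟨u, _, rfl⟩ := List.mem_map.1 hl
        simp
      · rw [List.pairwise_map]
        have hnd : US.toList.Nodup := Finset.nodup_toList _
        refine List.Pairwise.imp ?_ hnd
        intro a b hab v hva hvb
        simp only [List.mem_singleton] at hva hvb
        exact hab (hva ▸ hvb ▸ rfl)
    · -- disjoint pairs singles
      intro v hvp w hvs hvw
      rw [← hvw] at hvs
      rcases (hpairsmem v).1 hvp with hv | hv
      · exact (memRf v).1 ((Finset.mem_sdiff.1 (hRAdef ▸ hv)).1)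
          ((memSf v).1 (hUSfacts v ((hsinglesmem v).1 hvs)).1)
      · exact (hUSfacts v ((hsinglesmem v).1 hvs)).2.2 hv
    · -- disjoint P_W rest
      intro v hvw w hvr hveq
      rw [← hveq] at hvr
      have hvAN := (hPW3 v).1 hvw
      rcases List.mem_append.1 hvr with hvr | hvr
      · rcases (hpairsmem v).1 hvr with hv | hv
        · rcases hvAN with h | h
          · exact (hRAfacts v hv).2 h
          · exact (hRAfacts v hv).1 ((memSf v).1 (NSsub A h))
        · rcases hvAN with h | h
          · exact (memRf v).1 (hAsub h) ((memSf v).1 (hIMfacts v hv).1)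
          · exact (hIMfacts v hv).2 h
      · have hus := hUSfacts v ((hsinglesmem v).1 hvr)
        rcases hvAN with h | h
        · exact (memRf v).1 (hAsub h) ((memSf v).1 hus.1)
        · exact hus.2.1 h
  · -- coverage
    intro v
    simp only [Set.mem_univ, iff_true]
    rw [List.flatten_append, List.flatten_append]
    rw [List.mem_append, List.mem_append]
    by_cases hvS : v ∈ S
    · by_cases hvN : v ∈ NS A
      · exact Or.inl ((hPW3 v).2 (Or.inr hvN))
      · by_cases hvI : v ∈ IM
        · exact Or.inr (Or.inl ((hpairsmem v).2 (Or.inr hvI)))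
        · refine Or.inr (Or.inr ((hsinglesmem v).2 ?_))
          rw [hUSdef, Finset.mem_sdiff, Finset.mem_sdiff]
          exact ⟨⟨(memSf v).2 hvS, hvN⟩, hvI⟩
    · by_cases hvA : v ∈ A
      · exact Or.inl ((hPW3 v).2 (Or.inl hvA))
      · refine Or.inr (Or.inl ((hpairsmem v).2 (Or.inl ?_)))
        rw [hRAdef, Finset.mem_sdiff]
        exact ⟨(memRf v).2 hvS, hvA⟩
  · -- Orthogonal
    intro p hp
    rcases List.mem_append.1 hp with hp | hp
    · obtain ⟨u, hu, huniq⟩ := hPW4 p hp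
      refine ⟨u, ⟨hu.1, (memSf u).1 (NSsub A hu.2)⟩, ?_⟩
      rintro y ⟨hyp, hyS⟩
      have hyW : y ∈ P_W.flatten := List.mem_flatten.2 ⟨p, hp, hyp⟩
      rcases (hPW3 y).1 hyW with h | h
      · exact absurd hyS ((memRf y).1 (hAsub h))
      · exact huniq y ⟨hyp, h⟩
    rcases List.mem_append.1 hp with hp | hp
    · rw [hpairsdef] at hp
      obtain ⟨x, _, rfl⟩ := List.mem_map.1 hp
      refine ⟨f x, ⟨(hgpmem x _).2 (Or.inr rfl), (memSf _).1 (hfS x)⟩, ?_⟩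
      rintro y ⟨hyp, hyS⟩
      rcases (hgpmem x y).1 hyp with rfl | rfl
      · exact absurd hyS (hRAnotS x)
      · rfl
    · rw [hsinglesdef] at hp
      obtain ⟨u, hu, rfl⟩ := List.mem_map.1 hp
      rw [Finset.mem_toList] at hu
      refine ⟨u, ⟨List.mem_singleton_self u, (memSf u).1 (hUSfacts u hu).1⟩, ?_⟩
      rintro y ⟨hyp, _⟩
      exact List.mem_singleton.1 hyp
end

section
/- Let D be an arc-locally in-semicomplete digraph, and let H be an induced connected bipartite subdigraph of D with bipartition (X, Y), |X| ≥ 1, |Y| ≥ 1, such that every edge between X and Y is directed from X to Y. Let v be a vertex of D outside V(H) that dominates some vertex of X and has no in-neighbor in X. Then v dominates every vertex of X and no vertex of X dominates v. -/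
open Set

open Paper in
theorem stmt8 {V : Type*} [Fintype V] (E : V → V → Prop)
    (hALI : ArcLocallyInSemicomplete E) (X Y : Set V)
    (hXne : X.Nonempty) (hYne : Y.Nonempty) (hdisj : Disjoint X Y)
    (hXstab : Stable E X) (hYstab : Stable E Y)
    (hXY : NoBack E X Y)
    (hconn : ∀ a ∈ X ∪ Y, ∀ b ∈ X ∪ Y,
      Relation.ReflTransGen (fun p q => p ∈ X ∪ Y ∧ q ∈ X ∪ Y ∧ Adj E p q) a b)
    (v : V) (hv : v ∉ X ∪ Y) (hdom : ∃ x ∈ X, E v x)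
    (hnoin : ∀ x ∈ X, ¬ E x v) :
    ∀ x ∈ X, E v x ∧ ¬ E x v := by
  obtain ⟨x0, hx0X, hvx0⟩ := hdom
  intro x hxX
  refine ⟨?_, hnoin x hxX⟩
  have key : ∀ w, Relation.ReflTransGen (fun p q => p ∈ X ∪ Y ∧ q ∈ X ∪ Y ∧ Adj E p q) x0 w →
      (w ∈ X ∧ E v w) ∨ (w ∈ Y ∧ ∃ a ∈ X, E v a ∧ E a w) := by
    intro w h
    induction h with
    | refl => exact Or.inl ⟨hx0X, hvx0⟩
    | @tail b c _ step ih =>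
      obtain ⟨hb, hc, hadj⟩ := step
      rcases ih with ⟨hbX, hvb⟩ | ⟨hbY, a, haX, hva, hab⟩
      · rcases hc with hcX | hcY
        · by_cases hbc : b = c
          · exact Or.inl ⟨hcX, hbc ▸ hvb⟩
          · exact absurd hadj (hXstab b hbX c hcX hbc)
        · have hbcE : E b c := by
            rcases hadj with h' | h'
            · exact h'
            · exact absurd h' (hXY b hbX c hcY)
          exact Or.inr ⟨hcY, b, hbX, hvb, hbcE⟩
      · rcases hc with hcX | hcY
        · have hcbE : E c b := by
            rcases hadj with h' | h'
            · exact absurd h' (hXY c hcX b hbY)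
            · exact h'
          have := hALI a b hab v c hva hcbE
          rcases this with h' | h' | h'
          · exact absurd (h' ▸ Set.mem_union_left Y hcX) hv
          · exact Or.inl ⟨hcX, h'⟩
          · exact absurd h' (hnoin c hcX)
        · by_cases hbc : b = c
          · exact Or.inr ⟨hcY, a, haX, hva, hbc ▸ hab⟩
          · exact absurd hadj (hYstab b hbY c hcY hbc)
  have hx := key x (hconn x0 (Set.mem_union_left Y hx0X) x (Set.mem_union_left Y hxX))
  rcases hx with ⟨_, h⟩ | ⟨hxY, _⟩
  · exact h
  · exact absurd (Set.not_disjoint_iff.mpr ⟨x, hxX, hxY⟩) (fun h => h hdisj)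
end

section
/- Every anti-directed odd cycle fails to satisfy the α-property; that is, if C is a digraph whose underlying graph is a cycle x₁x₂...x_{2k+1}x₁ with k ≥ 2 and each of the vertices x₁, x₂, x₃, x₄, x₆, x₈, ..., x_{2k} is either a source or a sink, then there exists a maximum stable set S of C for which no path partition of C is orthogonal to S. -/
open Set

open Paper in
theorem stmt9 (k : ℕ) (hk : 2 ≤ k)
    (E : ZMod (2 * k + 1) → ZMod (2 * k + 1) → Prop)
    (hcyc : ∀ i j, Adj E i j ↔ (j = i + 1 ∨ i = j + 1))
    (hss : ∀ j : ℕ, 1 ≤ j → j ≤ 2 * k + 1 → (j ≤ 4 ∨ Even j) →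
      (∀ u, ¬ E u ((j : ZMod (2 * k + 1)) - 1)) ∨
      (∀ u, ¬ E ((j : ZMod (2 * k + 1)) - 1) u)) :
    ∃ S, MaxStableOn E Set.univ S ∧ ¬ ∃ P, SPartOn E Set.univ S P := by
  haveI : NeZero (2*k+1) := ⟨by omega⟩
  haveI : Fact (1 < 2*k+1) := ⟨by omega⟩
  have hvlt : ∀ v : ZMod (2*k+1), v.val < 2*k+1 := fun v => ZMod.val_lt v
  have hvself : ∀ v : ZMod (2*k+1), ((v.val : ℕ) : ZMod (2*k+1)) = v :=
    fun v => ZMod.natCast_rightInverse v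
  -- source/sink lemma
  have hssv : ∀ v : ZMod (2*k+1), (v.val ≤ 3 ∨ v.val % 2 = 1) →
      (∀ u, ¬ E u v) ∨ (∀ u, ¬ E v u) := by
    intro v hv
    have h1 := hss (v.val + 1) (by omega) (by have := hvlt v; omega)
      (by rcases hv with h | h
          · left; omega
          · right; rw [Nat.even_iff]; omega)
    have h2 : ((v.val + 1 : ℕ) : ZMod (2*k+1)) - 1 = v := by
      rw [Nat.cast_add, Nat.cast_one, hvself, add_sub_cancel_right]
    rwa [h2] at h1
  have hsub : ∀ v : ZMod (2*k+1), 1 ≤ v.val → (v - 1).val = v.val - 1 := by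
    intro v h
    have h2 : v - 1 = ((v.val - 1 : ℕ) : ZMod (2*k+1)) := by
      rw [Nat.cast_sub h, hvself, Nat.cast_one]
    rw [h2, ZMod.val_cast_of_lt (by have := hvlt v; omega)]
  have hadd : ∀ v : ZMod (2*k+1), v.val + 1 < 2*k+1 → (v + 1).val = v.val + 1 := by
    intro v h
    have h2 : ((v.val + 1 : ℕ) : ZMod (2*k+1)) = v + 1 := by
      rw [Nat.cast_add, Nat.cast_one, hvself]
    rw [← h2, ZMod.val_cast_of_lt h]
  set F : Finset (ZMod (2*k+1)) :=
    insert 0 ((Finset.Ico 1 k).image fun m : ℕ => ((2*m+1 : ℕ) : ZMod (2*k+1))) with hF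
  have hmem : ∀ v : ZMod (2*k+1),
      v ∈ F ↔ v.val = 0 ∨ (v.val % 2 = 1 ∧ 3 ≤ v.val ∧ v.val ≤ 2*k-1) := by
    intro v
    simp only [hF, Finset.mem_insert, Finset.mem_image, Finset.mem_Ico]
    constructor
    · rintro (rfl | ⟨m, ⟨h1, h2⟩, rfl⟩)
      · left; exact ZMod.val_zero
      · right; rw [ZMod.val_cast_of_lt (by omega)]; omega
    · rintro (h0 | ⟨h1, h2, h3⟩)
      · left; rw [← hvself v, h0, Nat.cast_zero]
      · right
        refine ⟨(v.val - 1)/2, ⟨by omega, by omega⟩, ?_⟩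
        rw [show 2*((v.val-1)/2)+1 = v.val by omega, hvself]
  have hcard : F.card = k := by
    rw [hF, Finset.card_insert_of_notMem, Finset.card_image_of_injOn, Nat.card_Ico]
    · omega
    · intro a ha b hb hab
      simp only [Finset.coe_Ico, Set.mem_Ico] at ha hb
      have h1 := ZMod.val_cast_of_lt (show 2*a+1 < 2*k+1 by omega)
      have h2 := ZMod.val_cast_of_lt (show 2*b+1 < 2*k+1 by omega)
      have h := congrArg ZMod.val hab
      rw [h1, h2] at h
      omega
    · simp only [Finset.mem_image, Finset.mem_Ico]
      rintro ⟨m, ⟨hm1, hm2⟩, hm3⟩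
      have := congrArg ZMod.val hm3
      rw [ZMod.val_cast_of_lt (show 2*m+1 < 2*k+1 by omega), ZMod.val_zero] at this
      omega
  -- no element of F is followed by an element of F
  have hnostep : ∀ u v : ZMod (2*k+1), u ∈ F → v = u + 1 → v ∉ F := by
    intro u v hu hv hvF
    have hu' := (hmem u).1 hu
    have hv' := (hmem v).1 hvF
    have hval : v.val = u.val + 1 := by
      subst hv; exact hadd u (by omega)
    omega
  have hstable : Stable E (↑F : Set (ZMod (2*k+1))) := by
    intro u hu v hv huv hadj
    rw [hcyc] at hadj
    rcases hadj with h | h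
    · exact hnostep u v hu h hv
    · exact hnostep v u hv h hu
  have hbound : ∀ T : Set (ZMod (2*k+1)), Stable E T → T.ncard ≤ k := by
    intro T hT
    have hfin : T.Finite := Set.toFinite T
    set G := hfin.toFinset with hG
    have h1 : (G.image (· + 1)).card = G.card :=
      Finset.card_image_of_injective _ (add_left_injective 1)
    have hdisj : Disjoint G (G.image (· + 1)) := by
      rw [Finset.disjoint_left]
      intro x hx hx'
      obtain ⟨s, hs, hsx⟩ := Finset.mem_image.mp hx'
      by_cases hsx' : s = x
      · subst hsx'
        have h0 : (1 : ZMod (2*k+1)) = 0 :=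
          add_left_cancel (a := s) (by rw [add_zero]; exact hsx)
        have h1 := congrArg ZMod.val h0
        rw [ZMod.val_one, ZMod.val_zero] at h1
        omega
      · exact hT s (hfin.mem_toFinset.mp hs) x (hfin.mem_toFinset.mp hx) hsx'
          ((hcyc s x).2 (Or.inl hsx.symm))
    have h2 : G.card + G.card ≤ 2*k+1 := by
      calc G.card + G.card = (G ∪ G.image (· + 1)).card := by
            rw [Finset.card_union_of_disjoint hdisj, h1]
        _ ≤ Fintype.card (ZMod (2*k+1)) := Finset.card_le_univ _
        _ = 2*k+1 := ZMod.card _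
    rw [Set.ncard_eq_toFinset_card T hfin, ← hG]
    omega
  refine ⟨↑F, ⟨⟨Set.subset_univ _, hstable⟩, ?_⟩, ?_⟩
  · intro T hT
    rw [Set.ncard_coe_finset, hcard]
    exact hbound T hT.2
  rintro ⟨P, ⟨⟨hpath, hnod, hcover⟩, horth⟩⟩
  have hnod' := hnod
  rw [List.nodup_flatten] at hnod'
  obtain ⟨hnodEach, hpairw⟩ := hnod'
  -- every path has at most 2 vertices
  have hlen2 : ∀ p ∈ P, p.length ≤ 2 := by
    intro p hp
    by_contra hlen
    push_neg at hlen
    rcases p with _ | ⟨a, _ | ⟨b, _ | ⟨c, t⟩⟩⟩ <;> simp at hlen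
    have hch := (hpath _ hp).2
    change List.IsChain E _ at hch
    rw [List.isChain_cons_cons] at hch
    obtain ⟨hab, hch⟩ := hch
    rw [List.isChain_cons_cons] at hch
    obtain ⟨hbc, -⟩ := hch
    have hnp : (a :: b :: c :: t).Nodup := hnodEach _ hp
    have hac : a ≠ c := by
      simp only [List.nodup_cons, List.mem_cons] at hnp
      tauto
    have hbfree : ¬ (b.val ≤ 3 ∨ b.val % 2 = 1) := by
      intro h
      rcases hssv b h with h' | h'
      · exact h' a hab
      · exact h' c hbc
    push_neg at hbfree
    have hb2k : b.val ≤ 2*k := by have := hvlt b; omega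
    have hbm : b - 1 ∈ F := by
      rw [hmem, hsub b (by omega)]
      right; omega
    have hbp : b + 1 ∈ F := by
      rcases Nat.lt_or_ge b.val (2*k) with h | h
      · rw [hmem, hadd b (by omega)]
        right; omega
      · have hb : b = ((2*k : ℕ) : ZMod (2*k+1)) := by
          rw [← hvself b]; congr 1; omega
        have hb0 : b + 1 = 0 := by
          rw [hb, show ((2*k : ℕ) : ZMod (2*k+1)) + 1 = ((2*k+1 : ℕ) : ZMod (2*k+1)) by
            push_cast; ring, ZMod.natCast_self]
        rw [hb0, hF]
        exact Finset.mem_insert_self _ _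
    have haF : a ∈ F := by
      rcases (hcyc a b).1 (Or.inl hab) with h | h
      · have : a = b - 1 := by rw [h]; ring
        rw [this]; exact hbm
      · rw [h]; exact hbp
    have hcF : c ∈ F := by
      rcases (hcyc b c).1 (Or.inl hbc) with h | h
      · rw [h]; exact hbp
      · have : c = b - 1 := by rw [h]; ring
        rw [this]; exact hbm
    obtain ⟨v0, -, huniq⟩ := horth _ hp
    have h1 : a = v0 := huniq a ⟨by simp, haF⟩
    have h2 : c = v0 := huniq c ⟨by simp, hcF⟩
    exact hac (h1.trans h2.symm)
  -- total length
  have hflatlen : P.flatten.length = 2*k+1 := by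
    have h1 : P.flatten.toFinset = Finset.univ :=
      Finset.eq_univ_iff_forall.mpr
        (fun v => List.mem_toFinset.mpr ((hcover v).2 (Set.mem_univ v)))
    have h2 := List.toFinset_card_of_nodup hnod
    rw [h1, Finset.card_univ, ZMod.card] at h2
    omega
  -- number of paths is at most k
  have hPlen : P.length ≤ k := by
    have hdisj : ∀ i j : Fin P.length, i ≠ j → List.Disjoint (P.get i) (P.get j) := by
      have hpw := List.pairwise_iff_get.mp hpairw
      intro i j hij
      rcases lt_or_gt_of_ne hij with h | h
      · exact hpw i j h
      · exact List.disjoint_comm.mp (hpw j i h)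
    classical
    have key : ∀ i : Fin P.length, ∃ v, v ∈ P.get i ∧ v ∈ (↑F : Set (ZMod (2*k+1))) :=
      fun i => (horth _ (List.get_mem P i)).exists
    choose f hf1 hf2 using key
    have hle : (Finset.univ : Finset (Fin P.length)).card ≤ F.card := by
      apply Finset.card_le_card_of_injOn f
      · intro i _; exact hf2 i
      · intro i _ j _ hfij
        by_contra hij
        exact hdisj i j hij (hf1 i) (hfij ▸ hf1 j)
    rw [Finset.card_univ, Fintype.card_fin, hcard] at hle
    exact hle
  have hsum : P.flatten.length ≤ P.length * 2 := by
    rw [List.length_flatten]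
    have := List.sum_le_card_nsmul (P.map List.length) 2 (by
      intro x hx
      obtain ⟨p, hp, rfl⟩ := List.mem_map.mp hx
      exact hlen2 p hp)
    simpa [smul_eq_mul, mul_comm] using this
  omega
end

section
/- Every blocking odd cycle fails to satisfy the BE-property; that is, if C is a digraph whose underlying graph is a cycle x₁x₂...x_{2k+1}x₁ with k ≥ 1, where x₁ is a source and x₂ is a sink, then there exists a maximum stable set S of C admitting no path partition that is orthogonal to S and in which every vertex of S starts or ends its path. -/
open Set

namespace BOCAux

lemma all_eq_singleton {α : Type*} {l : List α} {s : α} (hnd : l.Nodup)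
    (hall : ∀ x ∈ l, x = s) (hs : s ∈ l) : l = [s] := by
  cases l with
  | nil => simp at hs
  | cons x t =>
    have hx : x = s := hall x List.mem_cons_self
    have ht : t = [] := by
      cases t with
      | nil => rfl
      | cons y u =>
        exfalso
        have hy : y = s := hall y (by simp)
        have hnd' := List.nodup_cons.mp hnd
        exact hnd'.1 (by rw [hx, ← hy]; simp)
    simp [hx, ht]

end BOCAux

open Paper in
theorem stmt10 (k : ℕ) (hk : 1 ≤ k)
    (E : ZMod (2 * k + 1) → ZMod (2 * k + 1) → Prop)
    (hcyc : ∀ i j, Adj E i j ↔ (j = i + 1 ∨ i = j + 1))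
    (hsource : ∀ u, ¬ E u 0) (hsink : ∀ u, ¬ E 1 u) :
    ∃ S, MaxStableOn E Set.univ S ∧ ¬ ∃ P, BEPartOn E Set.univ S P := by
  classical
  haveI : NeZero (2 * k + 1) := ⟨by omega⟩
  haveI : Fact (1 < 2 * k + 1) := ⟨by omega⟩
  set S0 : Finset (ZMod (2 * k + 1)) :=
    (Finset.Icc 1 k).image (fun i : ℕ => ((2 * i : ℕ) : ZMod (2 * k + 1))) with hS0
  have hval_lt : ∀ v : ZMod (2 * k + 1), v.val < 2 * k + 1 := fun v => ZMod.val_lt v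
  have hmem : ∀ v : ZMod (2 * k + 1), v ∈ S0 ↔ (2 ∣ v.val ∧ v ≠ 0) := by
    intro v
    constructor
    · intro hv
      simp only [hS0, Finset.mem_image, Finset.mem_Icc] at hv
      obtain ⟨i, ⟨hi1, hik⟩, rfl⟩ := hv
      have hveq : ((2 * i : ℕ) : ZMod (2 * k + 1)).val = 2 * i :=
        ZMod.val_cast_of_lt (by omega)
      refine ⟨⟨i, hveq⟩, ?_⟩
      intro h0
      rw [h0, ZMod.val_zero] at hveq
      omega
    · rintro ⟨⟨i, hi⟩, h0⟩
      have h0' : v.val ≠ 0 := fun h => h0 ((ZMod.val_eq_zero v).mp h)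
      have hvl := hval_lt v
      simp only [hS0, Finset.mem_image, Finset.mem_Icc]
      refine ⟨i, ⟨by omega, by omega⟩, ?_⟩
      rw [← hi]
      exact ZMod.natCast_rightInverse v
  have hcard : S0.card = k := by
    rw [hS0, Finset.card_image_of_injOn, Nat.card_Icc]
    · omega
    · intro i hi j hj hij
      simp only [Finset.coe_Icc, Set.mem_Icc] at hi hj
      have h1 : ((2 * i : ℕ) : ZMod (2 * k + 1)).val = 2 * i :=
        ZMod.val_cast_of_lt (by omega)
      have h2 : ((2 * j : ℕ) : ZMod (2 * k + 1)).val = 2 * j :=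
        ZMod.val_cast_of_lt (by omega)
      simp only at hij
      rw [hij] at h1
      omega
  have hsucc : ∀ w : ZMod (2 * k + 1), (w + 1).val = (w.val + 1) % (2 * k + 1) := by
    intro w
    rw [ZMod.val_add, ZMod.val_one]
  have hstab : Stable E (↑S0 : Set (ZMod (2 * k + 1))) := by
    intro u hu v hv huv hadj
    rw [hcyc] at hadj
    rw [Finset.mem_coe, hmem] at hu hv
    obtain ⟨hu2, hu0⟩ := hu
    obtain ⟨hv2, hv0⟩ := hv
    have hu0' : u.val ≠ 0 := fun h => hu0 ((ZMod.val_eq_zero u).mp h)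
    have hv0' : v.val ≠ 0 := fun h => hv0 ((ZMod.val_eq_zero v).mp h)
    rcases hadj with h | h
    · have hs := hsucc u
      rw [← h] at hs
      have hul := hval_lt u
      rcases Nat.lt_or_ge (u.val + 1) (2 * k + 1) with hlt | hge
      · rw [Nat.mod_eq_of_lt hlt] at hs
        omega
      · have heq : u.val + 1 = 2 * k + 1 := by omega
        rw [heq, Nat.mod_self] at hs
        exact hv0' hs
    · have hs := hsucc v
      rw [← h] at hs
      have hvl := hval_lt v
      rcases Nat.lt_or_ge (v.val + 1) (2 * k + 1) with hlt | hge
      · rw [Nat.mod_eq_of_lt hlt] at hs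
        omega
      · have heq : v.val + 1 = 2 * k + 1 := by omega
        rw [heq, Nat.mod_self] at hs
        exact hu0' hs
  have hmax : ∀ T, StableOn E Set.univ T → T.ncard ≤ k := by
    rintro T ⟨-, hT⟩
    have hfin : T.Finite := Set.toFinite T
    set T' := hfin.toFinset with hT'
    have hdisj : Disjoint T' (T'.image (· + 1)) := by
      rw [Finset.disjoint_left]
      intro v hv hv'
      obtain ⟨u, hu, huv⟩ := Finset.mem_image.mp hv'
      have huT : u ∈ T := hfin.mem_toFinset.mp hu
      have hvT : v ∈ T := hfin.mem_toFinset.mp hv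
      have hne : u ≠ v := by
        rintro rfl
        have h1 : (u + 1).val = u.val := by rw [huv]
        rw [hsucc u] at h1
        have := hval_lt u
        rcases Nat.lt_or_ge (u.val + 1) (2 * k + 1) with hlt | hge
        · rw [Nat.mod_eq_of_lt hlt] at h1; omega
        · have heq : u.val + 1 = 2 * k + 1 := by omega
          rw [heq, Nat.mod_self] at h1; omega
      exact hT u huT v hvT hne ((hcyc u v).mpr (Or.inl huv.symm))
    have himg : (T'.image (· + 1)).card = T'.card :=
      Finset.card_image_of_injective _ (add_left_injective 1)
    have hun : (T' ∪ T'.image (· + 1)).card = T'.card + T'.card := by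
      rw [Finset.card_union_of_disjoint hdisj, himg]
    have hle : (T' ∪ T'.image (· + 1)).card ≤ 2 * k + 1 := by
      have h1 := Finset.card_le_univ (T' ∪ T'.image (· + 1))
      have h2 : Fintype.card (ZMod (2 * k + 1)) = 2 * k + 1 := ZMod.card _
      omega
    have hTcard : T.ncard = T'.card := Set.ncard_eq_toFinset_card T hfin
    omega
  refine ⟨(↑S0 : Set (ZMod (2 * k + 1))), ⟨⟨Set.subset_univ _, hstab⟩, ?_⟩, ?_⟩
  · intro T hTst
    rw [Set.ncard_coe_finset, hcard]
    exact hmax T hTst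
  rintro ⟨P, ⟨⟨⟨hpaths, hnd, hcov⟩, horth⟩, hends⟩⟩
  have hcov' : ∀ v : ZMod (2 * k + 1), v ∈ P.flatten := fun v => (hcov v).mpr trivial
  -- length of flatten
  have hflatlen : P.flatten.length = 2 * k + 1 := by
    rw [← List.toFinset_card_of_nodup hnd]
    have huniv : P.flatten.toFinset = Finset.univ := by
      ext v
      simp [hcov' v]
    rw [huniv, Finset.card_univ, ZMod.card]
  -- each path counts one S-vertex
  have hcount1 : ∀ p ∈ P, p.countP (fun v => decide (v ∈ S0)) = 1 := by
    intro p hp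
    obtain ⟨s, ⟨hsp, hsS⟩, huniq⟩ := horth p hp
    have hpnd : p.Nodup := hnd.sublist (List.sublist_flatten_of_mem hp)
    rw [List.countP_eq_length_filter]
    have hfil : p.filter (fun v => decide (v ∈ S0)) = [s] := by
      apply BOCAux.all_eq_singleton (hpnd.filter _)
      · intro x hx
        rw [List.mem_filter] at hx
        exact huniq x ⟨hx.1, by simpa using hx.2⟩
      · rw [List.mem_filter]
        exact ⟨hsp, by simpa using hsS⟩
    rw [hfil]
    rfl
  have hPlen : P.length = k := by
    have h1 : P.flatten.countP (fun v => decide (v ∈ S0)) = k := by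
      rw [List.countP_eq_length_filter, ← List.toFinset_card_of_nodup (hnd.filter _)]
      have hft : (P.flatten.filter (fun v => decide (v ∈ S0))).toFinset = S0 := by
        ext v
        simp only [List.mem_toFinset, List.mem_filter, decide_eq_true_eq]
        exact ⟨fun h => h.2, fun h => ⟨hcov' v, h⟩⟩
      rw [hft, hcard]
    rw [List.countP_flatten] at h1
    rw [List.map_congr_left (fun p hp => hcount1 p hp)] at h1
    rw [List.map_const', List.sum_replicate, smul_eq_mul, mul_one] at h1
    exact h1
  -- pigeonhole: some path has length ≥ 3
  have hex : ∃ p ∈ P, 3 ≤ p.length := by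
    by_contra hcon
    push_neg at hcon
    have hsum : (P.map List.length).sum = 2 * k + 1 := by
      rw [← List.length_flatten, hflatlen]
    have hle2 : (P.map List.length).sum ≤ (P.map (fun _ => 2)).sum := by
      apply List.sum_le_sum
      intro p hp
      have := hcon p hp
      omega
    rw [List.map_const', List.sum_replicate, smul_eq_mul, hPlen] at hle2
    omega
  obtain ⟨p, hp, hlen3⟩ := hex
  obtain ⟨s, ⟨hsp, hsS⟩, huniq⟩ := horth p hp
  have hpnd : p.Nodup := hnd.sublist (List.sublist_flatten_of_mem hp)
  have hchain : p.Chain' E := (hpaths p hp).2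
  have hsS0 : s ∈ S0 := by simpa using hsS
  -- key arithmetic lemma
  have hkey : ∀ u v : ZMod (2 * k + 1), E u v → u ∉ S0 → v ∉ S0 → u = 0 ∧ v = 1 := by
    intro u v hE hu hv
    have hadj : v = u + 1 ∨ u = v + 1 := (hcyc u v).mp (Or.inl hE)
    rcases hadj with rfl | rfl
    · by_cases hu0 : u = 0
      · exact ⟨hu0, by rw [hu0, zero_add]⟩
      exfalso
      have hu0' : u.val ≠ 0 := fun h => hu0 ((ZMod.val_eq_zero u).mp h)
      have hu2 : ¬ 2 ∣ u.val := fun h2 => hu ((hmem u).mpr ⟨h2, hu0⟩)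
      have hs := hsucc u
      have hul := hval_lt u
      rcases Nat.lt_or_ge (u.val + 1) (2 * k + 1) with hlt | hge
      · rw [Nat.mod_eq_of_lt hlt] at hs
        apply hv
        rw [hmem]
        constructor
        · rw [hs]; omega
        · intro h
          rw [h, ZMod.val_zero] at hs
          omega
      · have heq : u.val + 1 = 2 * k + 1 := by omega
        omega
    · by_cases hv0 : v = 0
      · exact absurd (hv0 ▸ hE) (hsource _)
      exfalso
      have hv0' : v.val ≠ 0 := fun h => hv0 ((ZMod.val_eq_zero v).mp h)
      have hv2 : ¬ 2 ∣ v.val := fun h2 => hv ((hmem v).mpr ⟨h2, hv0⟩)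
      have hs := hsucc v
      have hvl := hval_lt v
      rcases Nat.lt_or_ge (v.val + 1) (2 * k + 1) with hlt | hge
      · rw [Nat.mod_eq_of_lt hlt] at hs
        apply hu
        rw [hmem]
        constructor
        · rw [hs]; omega
        · intro h
          rw [h, ZMod.val_zero] at hs
          omega
      · have heq : v.val + 1 = 2 * k + 1 := by omega
        omega
  -- decompose p into at least three vertices
  obtain ⟨a, b, c, t, rfl⟩ : ∃ a b c t, p = a :: b :: c :: t := by
    match p, hlen3 with
    | x :: y :: z :: t, _ => exact ⟨x, y, z, t, rfl⟩
  have hEab : E a b := (List.isChain_cons_cons.mp hchain).1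
  have hEbc : E b c := (List.isChain_cons_cons.mp (List.isChain_cons_cons.mp hchain).2).1
  have hse := hends _ hp s hsp hsS
  rcases hse with hh | hl
  · -- s is the head, so s = a; then b, c ∉ S0 and E a b with b = 0
    have hsa : s = a := by
      simp only [List.head?_cons, Option.some.injEq] at hh
      exact hh.symm
    have hbS : b ∉ S0 := by
      intro hb
      have hbs : b = s := huniq b ⟨by simp, by simpa using hb⟩
      rw [hsa] at hbs
      exact (List.nodup_cons.mp hpnd).1 (by rw [← hbs]; simp)
    have hcS : c ∉ S0 := by
      intro hc
      have hcs : c = s := huniq c ⟨by simp, by simpa using hc⟩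
      rw [hsa] at hcs
      exact (List.nodup_cons.mp hpnd).1 (by rw [← hcs]; simp)
    obtain ⟨hb0, hc1⟩ := hkey b c hEbc hbS hcS
    rw [hb0] at hEab
    exact hsource a hEab
  · -- s is the last, so s ∈ c :: t; then a, b ∉ S0, so a = 0, b = 1, and E 1 c
    have hsl : s ∈ c :: t := by
      rw [List.getLast?_cons_cons, List.getLast?_cons_cons] at hl
      exact List.mem_of_getLast? hl
    have haS : a ∉ S0 := by
      intro ha
      have has : a = s := huniq a ⟨by simp, by simpa using ha⟩
      exact (List.nodup_cons.mp hpnd).1 (by rw [has]; exact List.mem_cons_of_mem _ hsl)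
    have hbS : b ∉ S0 := by
      intro hb
      have hbs : b = s := huniq b ⟨by simp, by simpa using hb⟩
      exact (List.nodup_cons.mp (List.nodup_cons.mp hpnd).2).1 (by rw [hbs]; exact hsl)
    obtain ⟨ha0, hb1⟩ := hkey a b hEab haS hbS
    rw [hb1] at hEbc
    exact hsink c hEbc
end

section
/- The transitive triangle (vertices v₁, v₂, v₃ with edges v₁v₂, v₁v₃, v₃v₂) does not satisfy the BE-property. -/
open Set

open Paper in
theorem stmt11 (E : Fin 3 → Fin 3 → Prop)
    (hE : ∀ u v, E u v ↔ ((u, v) = ((0 : Fin 3), (1 : Fin 3)) ∨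
      (u, v) = ((0 : Fin 3), (2 : Fin 3)) ∨ (u, v) = ((2 : Fin 3), (1 : Fin 3)))) :
    ¬ BEPropOn E Set.univ := by
  intro h
  have hadj : ∀ u v : Fin 3, u ≠ v → Adj E u v := by
    intro u v h
    fin_cases u <;> fin_cases v <;> simp_all [Adj, hE, Prod.ext_iff]
  have hS : MaxStableOn E Set.univ ({2} : Set (Fin 3)) := by
    refine ⟨⟨Set.subset_univ _, ?_⟩, ?_⟩
    · intro u hu v hv huv
      simp only [Set.mem_singleton_iff] at hu hv
      subst hu; subst hv; exact absurd rfl huv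
    · intro T hT
      have hsub : T.Subsingleton := by
        intro u hu v hv
        by_contra hne
        exact hT.2 u hu v hv hne (hadj u v hne)
      rw [Set.ncard_singleton]
      rcases hsub.eq_empty_or_singleton with rfl | ⟨a, rfl⟩
      · simp
      · simp [Set.ncard_singleton]
  obtain ⟨P, ⟨⟨⟨hpath, hnodup, hcover⟩, horth⟩, hBE⟩⟩ := h _ hS
  rw [List.nodup_flatten] at hnodup
  obtain ⟨hnd, hdisj⟩ := hnodup
  -- the path containing 2
  have h2 : (2 : Fin 3) ∈ P.flatten := (hcover 2).2 (Set.mem_univ _)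
  rw [List.mem_flatten] at h2
  obtain ⟨p, hpP, h2p⟩ := h2
  -- every vertex lies in p
  have hallp : ∀ v : Fin 3, v ∈ p := by
    intro v
    have hv : v ∈ P.flatten := (hcover v).2 (Set.mem_univ _)
    rw [List.mem_flatten] at hv
    obtain ⟨q, hqP, hvq⟩ := hv
    have h2q : (2 : Fin 3) ∈ q := by
      obtain ⟨w, ⟨hwq, hwS⟩, -⟩ := horth q hqP
      simp only [Set.mem_singleton_iff] at hwS
      subst hwS; exact hwq
    -- p = q using pairwise disjointness
    have hpq : p = q := by
      by_contra hne
      have hsym : Symmetric (fun a b : List (Fin 3) => List.Disjoint a b) :=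
        fun a b hab => hab.symm
      haveI : Std.Symm (@List.Disjoint (Fin 3)) := ⟨fun a b hab => hab.symm⟩
      exact (hdisj.forall hpP hqP hne) h2p h2q
    rw [hpq]; exact hvq
  -- p has length 3
  have hndp : p.Nodup := hnd p hpP
  have hlen : p.length = 3 := by
    have h1 : p.toFinset = Finset.univ := by
      apply Finset.eq_univ_of_forall
      intro v; simpa using hallp v
    have := List.toFinset_card_of_nodup hndp
    rw [h1] at this
    simpa using this.symm
  obtain ⟨a, b, c, rfl⟩ := List.length_eq_three.mp hlen
  have hchain : List.Chain' E [a, b, c] := (hpath _ hpP).2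
  have hEab : E a b := hchain.rel_head
  have hEbc : E b c := by
    have := hchain.tail; simpa using List.isChain_pair.mp this
  have hend := hBE _ hpP 2 (hallp 2) rfl
  simp only [List.head?, List.getLast?] at hend
  rw [hE] at hEab hEbc
  rcases hend with h2 | h2 <;> simp at h2 <;>
    simp_all [Prod.ext_iff]
end
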